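/- arXiv:2402.02702 — 2 statements merged into one kernel-verified Lean document; each statement's English description precedes it below -/
import Mathlib

section
/- Alternative product-form bias bound (Section 2.4, alternative representation of R₁,ₙ): there is a constant C, depending only on ε, M and P(S=0), such that for all admissible nuisance candidates μ̃₁₁, μ̃₁₀, μ̃₀₀, τ̃: | E[ H₁(μ̃₁₁, μ̃₁₀, μ̃₀₀, τ̃) ] − α₁ | ≤ C · ( ‖μ̃₁₁ − μ₁₁‖ + ‖μ̃₁₀ − μ₁₀‖ ) · ( ‖ μ̃₀₀/μ̃₁₀ − m₀/μ₁₀ ‖ + ‖τ̃ − τ‖ ). -/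
open MeasureTheory

/-- `m` is a version of the conditional expectation `E[Z ∣ X; B]`. -/
def IsVersion {Ω E : Type*} [MeasurableSpace Ω] [MeasurableSpace E]
    (P : Measure Ω) (X : Ω → E) (Z : Ω → ℝ) (B : Set Ω) (m : E → ℝ) : Prop :=
  Measurable m ∧
    ∀ h : E → ℝ, Measurable h → (∃ C, ∀ x, |h x| ≤ C) →
      ∫ ω in B, Z ω * h (X ω) ∂P = ∫ ω in B, m (X ω) * h (X ω) ∂P

/-- Conditional mean `E[Z ∣ B]` of a real random variable given an event `B`. -/
noncomputable def condMean {Ω : Type*} [MeasurableSpace Ω]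
    (P : Measure Ω) (Z : Ω → ℝ) (B : Set Ω) : ℝ :=
  (∫ ω in B, Z ω ∂P) / (P B).toReal

/-- The norm `‖f‖ = (E[f(X)²])^{1/2}`. -/
noncomputable def normX {Ω E : Type*} [MeasurableSpace Ω]
    (P : Measure Ω) (X : Ω → E) (f : E → ℝ) : ℝ :=
  Real.sqrt (∫ ω, (f (X ω)) ^ 2 ∂P)

/-- Admissible nuisance candidates for Scenario 1. -/
def Admissible1 {Ω E : Type*} [MeasurableSpace Ω] [MeasurableSpace E]
    (P : Measure Ω) (X : Ω → E) (ε M : ℝ) (m11 m10 m00 t : E → ℝ) : Prop :=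
  Measurable m11 ∧ Measurable m10 ∧ Measurable m00 ∧ Measurable t ∧
    ∀ᵐ ω ∂P, ε ≤ |m10 (X ω)| ∧ |m11 (X ω)| ≤ M ∧ |m10 (X ω)| ≤ M ∧
      |m00 (X ω)| ≤ M ∧ 0 ≤ t (X ω) ∧ t (X ω) ≤ M

/-- The Scenario 1 uncentered estimating function `H₁`, with `κ = 1/P(S=0)`. -/
noncomputable def H1 {Ω E : Type*} [MeasurableSpace Ω]
    (P : Measure Ω) (X : Ω → E) (S A Y : Ω → ℝ) (q m11 m10 m00 t : E → ℝ) :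
    Ω → ℝ := fun ω =>
  (P {ω' | S ω' = 0}).toReal⁻¹ *
    ((1 - S ω) * (m11 (X ω) / m10 (X ω)) * Y ω +
      S ω * t (X ω) * (m00 (X ω) / m10 (X ω)) *
        (A ω / q (X ω) * (Y ω - m11 (X ω)) -
          (1 - A ω) / (1 - q (X ω)) * (m11 (X ω) / m10 (X ω)) * (Y ω - m10 (X ω))))

section Helpers
variable {Ω E : Type*} [MeasurableSpace Ω] [MeasurableSpace E]

lemma abs_mul_le' {a b c d : ℝ} (h1 : |a| ≤ c) (h2 : |b| ≤ d) : |a * b| ≤ c * d := by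
  rw [abs_mul]; exact mul_le_mul h1 h2 (abs_nonneg _) ((abs_nonneg a).trans h1)

lemma abs_div_le' {a b c e : ℝ} (he : 0 < e) (hb : e ≤ |b|) (ha : |a| ≤ c) : |a / b| ≤ c / e := by
  rw [abs_div]
  exact div_le_div₀ ((abs_nonneg a).trans ha) ha he hb

lemma abs_sub_le'' {x y cx cy : ℝ} (hx : |x| ≤ cx) (hy : |y| ≤ cy) : |x - y| ≤ cx + cy := by
  rw [abs_le] at *
  constructor <;> [linarith [hx.1, hy.2]; linarith [hx.2, hy.1]]

lemma integ_bdd {P : Measure Ω} [IsFiniteMeasure P] {f : Ω → ℝ} {C : ℝ}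
    (hf : AEStronglyMeasurable f P) (h : ∀ᵐ ω ∂P, |f ω| ≤ C) : Integrable f P :=
  (integrable_const C).mono' hf (h.mono fun ω hω => by simpa [Real.norm_eq_abs] using hω)

lemma version_apply {P : Measure Ω} {X : Ω → E} {Z : Ω → ℝ} {B : Set Ω} {m : E → ℝ}
    (hv : IsVersion P X Z B m) {φ : E → ℝ} (hφ : Measurable φ) {C : ℝ} (hC : 0 ≤ C)
    (hb : ∀ᵐ ω ∂P, |φ (X ω)| ≤ C) :
    ∫ ω in B, Z ω * φ (X ω) ∂P = ∫ ω in B, m (X ω) * φ (X ω) ∂P := by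
  have hmeas : Measurable fun x => max (-C) (min C (φ x)) :=
    measurable_const.max (measurable_const.min hφ)
  have hbd : ∀ x, |max (-C) (min C (φ x))| ≤ C := by
    intro x
    rw [abs_le]
    exact ⟨le_max_left _ _, max_le (by linarith) (min_le_left _ _)⟩
  have key := hv.2 _ hmeas ⟨C, hbd⟩
  have hae : ∀ᵐ ω ∂P, max (-C) (min C (φ (X ω))) = φ (X ω) := by
    filter_upwards [hb] with ω hω
    rw [abs_le] at hω
    rw [min_eq_right hω.2, max_eq_right hω.1]
  calc ∫ ω in B, Z ω * φ (X ω) ∂P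
      = ∫ ω in B, Z ω * max (-C) (min C (φ (X ω))) ∂P := by
        refine integral_congr_ae ?_
        filter_upwards [ae_restrict_of_ae hae] with ω hω; rw [hω]
    _ = ∫ ω in B, m (X ω) * max (-C) (min C (φ (X ω))) ∂P := key
    _ = ∫ ω in B, m (X ω) * φ (X ω) ∂P := by
        refine integral_congr_ae ?_
        filter_upwards [ae_restrict_of_ae hae] with ω hω; rw [hω]

lemma cs_normX {P : Measure Ω} [IsProbabilityMeasure P] {X : Ω → E} (hX : Measurable X)
    {u v : E → ℝ} (hu : Measurable u) (hv : Measurable v) {Cu Cv : ℝ}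
    (hub : ∀ᵐ ω ∂P, |u (X ω)| ≤ Cu) (hvb : ∀ᵐ ω ∂P, |v (X ω)| ≤ Cv) :
    ∫ ω, |u (X ω)| * |v (X ω)| ∂P ≤ normX P X u * normX P X v := by
  have hpq : Real.HolderConjugate 2 2 := Real.holderConjugate_iff.mpr ⟨one_lt_two, by norm_num⟩
  have hmu : MemLp (fun ω => u (X ω)) (ENNReal.ofReal 2) P :=
    MemLp.of_bound ((hu.comp hX).aestronglyMeasurable) Cu
      (hub.mono fun ω h => by simpa [Real.norm_eq_abs] using h)
  have hmv : MemLp (fun ω => v (X ω)) (ENNReal.ofReal 2) P :=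
    MemLp.of_bound ((hv.comp hX).aestronglyMeasurable) Cv
      (hvb.mono fun ω h => by simpa [Real.norm_eq_abs] using h)
  have key := integral_mul_norm_le_Lp_mul_Lq (μ := P) hpq hmu hmv
  have habs : ∀ x : ℝ, ‖x‖ ^ (2:ℝ) = x ^ 2 := fun x => by
    rw [Real.norm_eq_abs, show (2:ℝ) = ((2:ℕ):ℝ) by norm_num, Real.rpow_natCast, sq_abs]
  rw [show ∫ ω, ‖u (X ω)‖ ^ (2:ℝ) ∂P = ∫ ω, (u (X ω)) ^ 2 ∂P from
        integral_congr_ae (.of_forall fun ω => habs _),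
      show ∫ ω, ‖v (X ω)‖ ^ (2:ℝ) ∂P = ∫ ω, (v (X ω)) ^ 2 ∂P from
        integral_congr_ae (.of_forall fun ω => habs _)] at key
  rw [normX, normX, Real.sqrt_eq_rpow, Real.sqrt_eq_rpow]
  simpa [Real.norm_eq_abs] using key

end Helpers

set_option maxHeartbeats 2000000 in
/-- Alternative product-form bias bound (Section 2.4, alternative representation of
`R₁,ₙ`): there is a constant `C`, depending only on `ε`, `M` and `P(S=0)`, such that
for all admissible nuisance candidates,
`|E[H₁(μ̃₁₁,μ̃₁₀,μ̃₀₀,τ̃)] − α₁| ≤ C·(‖μ̃₁₁ − μ₁₁‖ + ‖μ̃₁₀ − μ₁₀‖)·(‖μ̃₀₀/μ̃₁₀ − m₀/μ₁₀‖ + ‖τ̃ − τ‖)`. -/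
theorem H1_alternative_product_bias_bound
    {Ω E : Type*} [MeasurableSpace Ω] [MeasurableSpace E]
    (P : Measure Ω) [IsProbabilityMeasure P]
    (X : Ω → E) (S A Y : Ω → ℝ)
    (hX : Measurable X) (hS : Measurable S) (hA : Measurable A) (hY : Measurable Y)
    (hS01 : ∀ ω, S ω = 0 ∨ S ω = 1) (hA01 : ∀ ω, A ω = 0 ∨ A ω = 1)
    (hPS0 : 0 < P {ω | S ω = 0})
    (hPS1A1 : 0 < P {ω | S ω = 1 ∧ A ω = 1})
    (hPS1A0 : 0 < P {ω | S ω = 1 ∧ A ω = 0})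
    (μ11 μ10 m0 g q : E → ℝ)
    (hμ11 : IsVersion P X Y {ω | S ω = 1 ∧ A ω = 1} μ11)
    (hμ10 : IsVersion P X Y {ω | S ω = 1 ∧ A ω = 0} μ10)
    (hm0 : IsVersion P X Y {ω | S ω = 0} m0)
    (hg : IsVersion P X S Set.univ g)
    (hq : IsVersion P X A {ω | S ω = 1} q)
    (ε M : ℝ) (hε0 : 0 < ε) (hε1 : ε < 1) (hM : 1 ≤ M)
    (hbd : ∀ᵐ ω ∂P,
      ε ≤ g (X ω) ∧ g (X ω) ≤ 1 - ε ∧ ε ≤ q (X ω) ∧ q (X ω) ≤ 1 - ε ∧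
      ε ≤ |μ10 (X ω)| ∧ |μ11 (X ω)| ≤ M ∧ |μ10 (X ω)| ≤ M ∧ |m0 (X ω)| ≤ M ∧
      |Y ω| ≤ M ∧ (1 - g (X ω)) / g (X ω) ≤ M)
    (htruth : Admissible1 P X ε M μ11 μ10 m0 (fun x => (1 - g x) / g x))
    :
    ∃ C : ℝ, ∀ m11 m10 m00 t : E → ℝ, Admissible1 P X ε M m11 m10 m00 t →
      |(∫ ω, H1 P X S A Y q m11 m10 m00 t ω ∂P) -
          condMean P (fun ω => μ11 (X ω) / μ10 (X ω) * Y ω) {ω | S ω = 0}|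
        ≤ C * (normX P X (fun x => m11 x - μ11 x) +
              normX P X (fun x => m10 x - μ10 x)) *
            (normX P X (fun x => m00 x / m10 x - m0 x / μ10 x) +
              normX P X (fun x => t x - (1 - g x) / g x)) := by
  classical
  have hM0 : (0:ℝ) < M := lt_of_lt_of_le one_pos hM
  set Bε : ℝ := M / ε with hBεdef
  have hBε0 : (0:ℝ) < Bε := div_pos hM0 hε0
  have hMBε : M ≤ Bε := by
    rw [hBεdef, le_div_iff₀ hε0]; nlinarith
  have h1Bε : (1:ℝ) ≤ Bε := le_trans hM hMBε
  set κ : ℝ := (P {ω | S ω = 0}).toReal⁻¹ with hκdef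
  have hPS0' : 0 < (P {ω | S ω = 0}).toReal :=
    ENNReal.toReal_pos hPS0.ne' (measure_ne_top _ _)
  have hκ0 : 0 < κ := inv_pos.mpr hPS0'
  refine ⟨κ * Bε ^ 2, ?_⟩
  intro a b c t hadm
  obtain ⟨ham, hbm, hcm, htm, habd⟩ := hadm
  have hμ11m := hμ11.1
  have hμ10m := hμ10.1
  have hm0m := hm0.1
  have hgm := hg.1
  have hqm := hq.1
  -- measurable sets
  have hB0 : MeasurableSet {ω | S ω = 0} := hS (measurableSet_singleton 0)
  have hB1 : MeasurableSet {ω | S ω = 1} := hS (measurableSet_singleton 1)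
  have hB11 : MeasurableSet {ω | S ω = 1 ∧ A ω = 1} :=
    (hS (measurableSet_singleton 1)).inter (hA (measurableSet_singleton 1))
  have hB10 : MeasurableSet {ω | S ω = 1 ∧ A ω = 0} :=
    (hS (measurableSet_singleton 1)).inter (hA (measurableSet_singleton 0))
  -- pointwise bounds on S, A
  have hSb : ∀ ω, |S ω| ≤ 1 := fun ω => by rcases hS01 ω with h | h <;> simp [h]
  have h1mSb : ∀ ω, |1 - S ω| ≤ 1 := fun ω => by rcases hS01 ω with h | h <;> simp [h]
  have hAb : ∀ ω, |A ω| ≤ 1 := fun ω => by rcases hA01 ω with h | h <;> simp [h]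
  have h1mAb : ∀ ω, |1 - A ω| ≤ 1 := fun ω => by rcases hA01 ω with h | h <;> simp [h]
  -- a.e. bounds
  have hgb : ∀ᵐ ω ∂P, |g (X ω)| ≤ 1 := by
    filter_upwards [hbd] with ω h
    rw [abs_le]; constructor <;> [linarith [h.1]; linarith [h.2.1]]
  have h1mgb : ∀ᵐ ω ∂P, |1 - g (X ω)| ≤ 1 := by
    filter_upwards [hbd] with ω h
    rw [abs_le]; constructor <;> [linarith [h.2.1]; linarith [h.1]]
  have hqb : ∀ᵐ ω ∂P, |q (X ω)| ≤ 1 := by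
    filter_upwards [hbd] with ω h
    rw [abs_le]; constructor <;> [linarith [h.2.2.1]; linarith [h.2.2.2.1]]
  have h1mqb : ∀ᵐ ω ∂P, |1 - q (X ω)| ≤ 1 := by
    filter_upwards [hbd] with ω h
    rw [abs_le]; constructor <;> [linarith [h.2.2.2.1]; linarith [h.2.2.1]]
  have hYb : ∀ᵐ ω ∂P, |Y ω| ≤ M := by
    filter_upwards [hbd] with ω h; exact h.2.2.2.2.2.2.2.2.1
  have htab : ∀ᵐ ω ∂P, |t (X ω)| ≤ M := by
    filter_upwards [habd] with ω h
    rw [abs_of_nonneg h.2.2.2.2.1]; exact h.2.2.2.2.2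
  have hτab : ∀ᵐ ω ∂P, |(1 - g (X ω)) / g (X ω)| ≤ M := by
    filter_upwards [hbd] with ω h
    have hg0 : 0 < g (X ω) := lt_of_lt_of_le hε0 h.1
    have hτ0 : 0 ≤ (1 - g (X ω)) / g (X ω) :=
      div_nonneg (by linarith [h.2.1]) hg0.le
    rw [abs_of_nonneg hτ0]; exact h.2.2.2.2.2.2.2.2.2
  have hab : ∀ᵐ ω ∂P, |a (X ω) / b (X ω)| ≤ Bε := by
    filter_upwards [habd] with ω h
    exact abs_div_le' hε0 h.1 h.2.1
  have hcb : ∀ᵐ ω ∂P, |c (X ω) / b (X ω)| ≤ Bε := by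
    filter_upwards [habd] with ω h
    exact abs_div_le' hε0 h.1 h.2.2.2.1
  have hμμ : ∀ᵐ ω ∂P, |μ11 (X ω) / μ10 (X ω)| ≤ Bε := by
    filter_upwards [hbd] with ω h
    exact abs_div_le' hε0 h.2.2.2.2.1 h.2.2.2.2.2.1
  have hm0μ10 : ∀ᵐ ω ∂P, |m0 (X ω) / μ10 (X ω)| ≤ Bε := by
    filter_upwards [hbd] with ω h
    exact abs_div_le' hε0 h.2.2.2.2.1 h.2.2.2.2.2.2.2.1
  -- integrability helpers
  have intX : ∀ {φ : E → ℝ}, Measurable φ → ∀ {C : ℝ}, (∀ᵐ ω ∂P, |φ (X ω)| ≤ C) →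
      Integrable (fun ω => φ (X ω)) P :=
    fun hφ _ hb => integ_bdd ((hφ.comp hX).aestronglyMeasurable) hb
  have intFX : ∀ (ρ : Ω → ℝ), Measurable ρ → ∀ {D : ℝ}, (∀ᵐ ω ∂P, |ρ ω| ≤ D) →
      ∀ {φ : E → ℝ}, Measurable φ → ∀ {C : ℝ}, (∀ᵐ ω ∂P, |φ (X ω)| ≤ C) →
      Integrable (fun ω => ρ ω * φ (X ω)) P := by
    intro ρ hρ D hρb φ hφ C hφb
    refine integ_bdd (C := D * C) ((hρ.mul (hφ.comp hX)).aestronglyMeasurable) ?_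
    filter_upwards [hρb, hφb] with ω h1 h2
    exact abs_mul_le' h1 h2
  -- indicator conversions
  have ind0 : ∀ f : Ω → ℝ, ∫ ω in {ω | S ω = 0}, f ω ∂P = ∫ ω, (1 - S ω) * f ω ∂P := by
    intro f
    rw [← integral_indicator hB0]
    refine integral_congr_ae (.of_forall fun ω => ?_)
    rcases hS01 ω with h | h <;>
      simp [Set.indicator_apply, Set.mem_setOf_eq, h]
  have ind1 : ∀ f : Ω → ℝ, ∫ ω in {ω | S ω = 1}, f ω ∂P = ∫ ω, S ω * f ω ∂P := by
    intro f
    rw [← integral_indicator hB1]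
    refine integral_congr_ae (.of_forall fun ω => ?_)
    rcases hS01 ω with h | h <;>
      simp [Set.indicator_apply, Set.mem_setOf_eq, h]
  have ind11 : ∀ f : Ω → ℝ,
      ∫ ω in {ω | S ω = 1 ∧ A ω = 1}, f ω ∂P = ∫ ω, (S ω * A ω) * f ω ∂P := by
    intro f
    rw [← integral_indicator hB11]
    refine integral_congr_ae (.of_forall fun ω => ?_)
    rcases hS01 ω with h | h <;> rcases hA01 ω with h' | h' <;>
      simp [Set.indicator_apply, Set.mem_setOf_eq, h, h']
  have ind10 : ∀ f : Ω → ℝ,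
      ∫ ω in {ω | S ω = 1 ∧ A ω = 0}, f ω ∂P = ∫ ω, (S ω * (1 - A ω)) * f ω ∂P := by
    intro f
    rw [← integral_indicator hB10]
    refine integral_congr_ae (.of_forall fun ω => ?_)
    rcases hS01 ω with h | h <;> rcases hA01 ω with h' | h' <;>
      simp [Set.indicator_apply, Set.mem_setOf_eq, h, h']
  -- transfer lemmas
  have L_S : ∀ {φ : E → ℝ}, Measurable φ → ∀ {C : ℝ}, 0 ≤ C → (∀ᵐ ω ∂P, |φ (X ω)| ≤ C) →
      ∫ ω, S ω * φ (X ω) ∂P = ∫ ω, g (X ω) * φ (X ω) ∂P := by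
    intro φ hφ C hC hb
    have := version_apply hg hφ hC hb
    rwa [setIntegral_univ, setIntegral_univ] at this
  have L_1mS : ∀ {φ : E → ℝ}, Measurable φ → ∀ {C : ℝ}, 0 ≤ C → (∀ᵐ ω ∂P, |φ (X ω)| ≤ C) →
      ∫ ω, (1 - S ω) * φ (X ω) ∂P = ∫ ω, (1 - g (X ω)) * φ (X ω) ∂P := by
    intro φ hφ C hC hb
    have i1 : Integrable (fun ω => φ (X ω)) P := intX hφ hb
    have i2 : Integrable (fun ω => S ω * φ (X ω)) P := intFX S hS (.of_forall hSb) hφ hb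
    have i3 : Integrable (fun ω => g (X ω) * φ (X ω)) P := by
      refine intX (hgm.mul hφ) (C := 1 * C) ?_
      filter_upwards [hgb, hb] with ω h1 h2
      exact abs_mul_le' h1 h2
    calc ∫ ω, (1 - S ω) * φ (X ω) ∂P
        = ∫ ω, (φ (X ω) - S ω * φ (X ω)) ∂P :=
          integral_congr_ae (.of_forall fun ω => by ring)
      _ = ∫ ω, φ (X ω) ∂P - ∫ ω, S ω * φ (X ω) ∂P := integral_sub i1 i2
      _ = ∫ ω, φ (X ω) ∂P - ∫ ω, g (X ω) * φ (X ω) ∂P := by rw [L_S hφ hC hb]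
      _ = ∫ ω, (φ (X ω) - g (X ω) * φ (X ω)) ∂P := (integral_sub i1 i3).symm
      _ = ∫ ω, (1 - g (X ω)) * φ (X ω) ∂P :=
          integral_congr_ae (.of_forall fun ω => by ring)
  have L_SA : ∀ {χ : E → ℝ}, Measurable χ → ∀ {C : ℝ}, 0 ≤ C → (∀ᵐ ω ∂P, |χ (X ω)| ≤ C) →
      ∫ ω, (S ω * A ω) * χ (X ω) ∂P = ∫ ω, g (X ω) * (q (X ω) * χ (X ω)) ∂P := by
    intro χ hχ C hC hb
    have h1 : ∫ ω, (S ω * A ω) * χ (X ω) ∂P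
        = ∫ ω in {ω | S ω = 1}, A ω * χ (X ω) ∂P := by
      rw [ind1 (fun ω => A ω * χ (X ω))]
      exact integral_congr_ae (.of_forall fun ω => by ring)
    rw [h1, version_apply hq hχ hC hb, ind1 (fun ω => q (X ω) * χ (X ω))]
    refine L_S (φ := fun x => q x * χ x) (hqm.mul hχ) (C := 1 * C) (by positivity) ?_
    filter_upwards [hqb, hb] with ω h1 h2
    exact abs_mul_le' h1 h2
  have L_S1mA : ∀ {χ : E → ℝ}, Measurable χ → ∀ {C : ℝ}, 0 ≤ C → (∀ᵐ ω ∂P, |χ (X ω)| ≤ C) →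
      ∫ ω, (S ω * (1 - A ω)) * χ (X ω) ∂P
        = ∫ ω, g (X ω) * ((1 - q (X ω)) * χ (X ω)) ∂P := by
    intro χ hχ C hC hb
    have i1 : Integrable (fun ω => χ (X ω)) ((P.restrict {ω | S ω = 1})) :=
      (intX hχ hb).restrict
    have i2 : Integrable (fun ω => A ω * χ (X ω)) (P.restrict {ω | S ω = 1}) :=
      (intFX A hA (.of_forall hAb) hχ hb).restrict
    have i3 : Integrable (fun ω => q (X ω) * χ (X ω)) (P.restrict {ω | S ω = 1}) := by
      refine Integrable.restrict (intX (hqm.mul hχ) (C := 1 * C) ?_)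
      filter_upwards [hqb, hb] with ω h1 h2
      exact abs_mul_le' h1 h2
    have h1 : ∫ ω, (S ω * (1 - A ω)) * χ (X ω) ∂P
        = ∫ ω in {ω | S ω = 1}, (1 - A ω) * χ (X ω) ∂P := by
      rw [ind1 (fun ω => (1 - A ω) * χ (X ω))]
      exact integral_congr_ae (.of_forall fun ω => by ring)
    have h2 : ∫ ω in {ω | S ω = 1}, (1 - A ω) * χ (X ω) ∂P
        = ∫ ω in {ω | S ω = 1}, (1 - q (X ω)) * χ (X ω) ∂P := by
      calc ∫ ω in {ω | S ω = 1}, (1 - A ω) * χ (X ω) ∂P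
          = ∫ ω in {ω | S ω = 1}, (χ (X ω) - A ω * χ (X ω)) ∂P :=
            integral_congr_ae (.of_forall fun ω => by ring)
        _ = (∫ ω in {ω | S ω = 1}, χ (X ω) ∂P)
            - ∫ ω in {ω | S ω = 1}, A ω * χ (X ω) ∂P := integral_sub i1 i2
        _ = (∫ ω in {ω | S ω = 1}, χ (X ω) ∂P)
            - ∫ ω in {ω | S ω = 1}, q (X ω) * χ (X ω) ∂P := by
            rw [version_apply hq hχ hC hb]
        _ = ∫ ω in {ω | S ω = 1}, (χ (X ω) - q (X ω) * χ (X ω)) ∂P :=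
            (integral_sub i1 i3).symm
        _ = ∫ ω in {ω | S ω = 1}, (1 - q (X ω)) * χ (X ω) ∂P :=
            integral_congr_ae (.of_forall fun ω => by ring)
    rw [h1, h2, ind1 (fun ω => (1 - q (X ω)) * χ (X ω))]
    refine L_S (φ := fun x => (1 - q x) * χ x) ((measurable_const.sub hqm).mul hχ)
      (C := 1 * C) (by positivity) ?_
    filter_upwards [h1mqb, hb] with ω h1 h2
    exact abs_mul_le' h1 h2
  -- conditional expectation reductions
  have keyY0 : ∀ {φ : E → ℝ}, Measurable φ → ∀ {C : ℝ}, 0 ≤ C →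
      (∀ᵐ ω ∂P, |φ (X ω)| ≤ C) →
      ∫ ω, (1 - S ω) * (φ (X ω) * Y ω) ∂P
        = ∫ ω, (1 - g (X ω)) * (m0 (X ω) * φ (X ω)) ∂P := by
    intro φ hφ C hC hb
    have h1 : ∫ ω, (1 - S ω) * (φ (X ω) * Y ω) ∂P
        = ∫ ω in {ω | S ω = 0}, Y ω * φ (X ω) ∂P := by
      rw [ind0 (fun ω => Y ω * φ (X ω))]
      exact integral_congr_ae (.of_forall fun ω => by ring)
    rw [h1, version_apply hm0 hφ hC hb, ind0 (fun ω => m0 (X ω) * φ (X ω))]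
    refine L_1mS (φ := fun x => m0 x * φ x) (hm0m.mul hφ) (C := M * C) (by positivity) ?_
    filter_upwards [hbd, hb] with ω h1 h2
    exact abs_mul_le' h1.2.2.2.2.2.2.2.1 h2
  have keyY11 : ∀ {ψ : E → ℝ}, Measurable ψ → ∀ {C : ℝ}, 0 ≤ C →
      (∀ᵐ ω ∂P, |ψ (X ω)| ≤ C) →
      ∫ ω, (S ω * A ω) * (ψ (X ω) * (Y ω - a (X ω))) ∂P
        = ∫ ω, g (X ω) * (q (X ω) * ((μ11 (X ω) - a (X ω)) * ψ (X ω))) ∂P := by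
    intro ψ hψ C hC hb
    have iY : Integrable (fun ω => (S ω * A ω * Y ω) * ψ (X ω)) P := by
      refine intFX (fun ω => S ω * A ω * Y ω) ((hS.mul hA).mul hY) (D := 1 * 1 * M) ?_ hψ hb
      filter_upwards [hYb] with ω h
      exact abs_mul_le' (abs_mul_le' (hSb ω) (hAb ω)) h
    have ia : Integrable (fun ω => (S ω * A ω) * (a (X ω) * ψ (X ω))) P := by
      refine intFX (fun ω => S ω * A ω) (hS.mul hA)
        (.of_forall fun ω => abs_mul_le' (hSb ω) (hAb ω))
        (ham.mul hψ) (C := M * C) ?_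
      filter_upwards [habd, hb] with ω h1 h2
      exact abs_mul_le' h1.2.1 h2
    have iμ : Integrable (fun ω => (S ω * A ω) * (μ11 (X ω) * ψ (X ω))) P := by
      refine intFX (fun ω => S ω * A ω) (hS.mul hA)
        (.of_forall fun ω => abs_mul_le' (hSb ω) (hAb ω))
        (hμ11m.mul hψ) (C := M * C) ?_
      filter_upwards [hbd, hb] with ω h1 h2
      exact abs_mul_le' h1.2.2.2.2.2.1 h2
    have hY11 : ∫ ω, (S ω * A ω * Y ω) * ψ (X ω) ∂P
        = ∫ ω, (S ω * A ω) * (μ11 (X ω) * ψ (X ω)) ∂P := by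
      have e1 : ∫ ω, (S ω * A ω * Y ω) * ψ (X ω) ∂P
          = ∫ ω in {ω | S ω = 1 ∧ A ω = 1}, Y ω * ψ (X ω) ∂P := by
        rw [ind11 (fun ω => Y ω * ψ (X ω))]
        exact integral_congr_ae (.of_forall fun ω => by ring)
      rw [e1, version_apply hμ11 hψ hC hb, ind11 (fun ω => μ11 (X ω) * ψ (X ω))]
    calc ∫ ω, (S ω * A ω) * (ψ (X ω) * (Y ω - a (X ω))) ∂P
        = ∫ ω, ((S ω * A ω * Y ω) * ψ (X ω) - (S ω * A ω) * (a (X ω) * ψ (X ω))) ∂P :=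
          integral_congr_ae (.of_forall fun ω => by ring)
      _ = (∫ ω, (S ω * A ω * Y ω) * ψ (X ω) ∂P)
          - ∫ ω, (S ω * A ω) * (a (X ω) * ψ (X ω)) ∂P := integral_sub iY ia
      _ = (∫ ω, (S ω * A ω) * (μ11 (X ω) * ψ (X ω)) ∂P)
          - ∫ ω, (S ω * A ω) * (a (X ω) * ψ (X ω)) ∂P := by rw [hY11]
      _ = ∫ ω, ((S ω * A ω) * (μ11 (X ω) * ψ (X ω)) - (S ω * A ω) * (a (X ω) * ψ (X ω))) ∂P :=
          (integral_sub iμ ia).symm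
      _ = ∫ ω, (S ω * A ω) * ((fun x => (μ11 x - a x) * ψ x) (X ω)) ∂P :=
          integral_congr_ae (.of_forall fun ω => by ring)
      _ = ∫ ω, g (X ω) * (q (X ω) * ((μ11 (X ω) - a (X ω)) * ψ (X ω))) ∂P := by
          refine L_SA ((hμ11m.sub ham).mul hψ) (C := (M + M) * C) (by positivity) ?_
          filter_upwards [hbd, habd, hb] with ω h1 h2 h3
          exact abs_mul_le' (abs_sub_le'' h1.2.2.2.2.2.1 h2.2.1) h3
  have keyY10 : ∀ {ψ : E → ℝ}, Measurable ψ → ∀ {C : ℝ}, 0 ≤ C →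
      (∀ᵐ ω ∂P, |ψ (X ω)| ≤ C) →
      ∫ ω, (S ω * (1 - A ω)) * (ψ (X ω) * (Y ω - b (X ω))) ∂P
        = ∫ ω, g (X ω) * ((1 - q (X ω)) * ((μ10 (X ω) - b (X ω)) * ψ (X ω))) ∂P := by
    intro ψ hψ C hC hb
    have iY : Integrable (fun ω => (S ω * (1 - A ω) * Y ω) * ψ (X ω)) P := by
      refine intFX (fun ω => S ω * (1 - A ω) * Y ω) ((hS.mul (measurable_const.sub hA)).mul hY)
        (D := 1 * 1 * M) ?_ hψ hb
      filter_upwards [hYb] with ω h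
      exact abs_mul_le' (abs_mul_le' (hSb ω) (h1mAb ω)) h
    have ib : Integrable (fun ω => (S ω * (1 - A ω)) * (b (X ω) * ψ (X ω))) P := by
      refine intFX (fun ω => S ω * (1 - A ω)) (hS.mul (measurable_const.sub hA))
        (.of_forall fun ω => abs_mul_le' (hSb ω) (h1mAb ω))
        (hbm.mul hψ) (C := M * C) ?_
      filter_upwards [habd, hb] with ω h1 h2
      exact abs_mul_le' h1.2.2.1 h2
    have iμ : Integrable (fun ω => (S ω * (1 - A ω)) * (μ10 (X ω) * ψ (X ω))) P := by
      refine intFX (fun ω => S ω * (1 - A ω)) (hS.mul (measurable_const.sub hA))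
        (.of_forall fun ω => abs_mul_le' (hSb ω) (h1mAb ω))
        (hμ10m.mul hψ) (C := M * C) ?_
      filter_upwards [hbd, hb] with ω h1 h2
      exact abs_mul_le' h1.2.2.2.2.2.2.1 h2
    have hY10 : ∫ ω, (S ω * (1 - A ω) * Y ω) * ψ (X ω) ∂P
        = ∫ ω, (S ω * (1 - A ω)) * (μ10 (X ω) * ψ (X ω)) ∂P := by
      have e1 : ∫ ω, (S ω * (1 - A ω) * Y ω) * ψ (X ω) ∂P
          = ∫ ω in {ω | S ω = 1 ∧ A ω = 0}, Y ω * ψ (X ω) ∂P := by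
        rw [ind10 (fun ω => Y ω * ψ (X ω))]
        exact integral_congr_ae (.of_forall fun ω => by ring)
      rw [e1, version_apply hμ10 hψ hC hb, ind10 (fun ω => μ10 (X ω) * ψ (X ω))]
    calc ∫ ω, (S ω * (1 - A ω)) * (ψ (X ω) * (Y ω - b (X ω))) ∂P
        = ∫ ω, ((S ω * (1 - A ω) * Y ω) * ψ (X ω)
            - (S ω * (1 - A ω)) * (b (X ω) * ψ (X ω))) ∂P :=
          integral_congr_ae (.of_forall fun ω => by ring)
      _ = (∫ ω, (S ω * (1 - A ω) * Y ω) * ψ (X ω) ∂P)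
          - ∫ ω, (S ω * (1 - A ω)) * (b (X ω) * ψ (X ω)) ∂P := integral_sub iY ib
      _ = (∫ ω, (S ω * (1 - A ω)) * (μ10 (X ω) * ψ (X ω)) ∂P)
          - ∫ ω, (S ω * (1 - A ω)) * (b (X ω) * ψ (X ω)) ∂P := by rw [hY10]
      _ = ∫ ω, ((S ω * (1 - A ω)) * (μ10 (X ω) * ψ (X ω)) - (S ω * (1 - A ω)) * (b (X ω) * ψ (X ω))) ∂P :=
          (integral_sub iμ ib).symm
      _ = ∫ ω, (S ω * (1 - A ω)) * ((fun x => (μ10 x - b x) * ψ x) (X ω)) ∂P :=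
          integral_congr_ae (.of_forall fun ω => by ring)
      _ = ∫ ω, g (X ω) * ((1 - q (X ω)) * ((μ10 (X ω) - b (X ω)) * ψ (X ω))) ∂P := by
          refine L_S1mA ((hμ10m.sub hbm).mul hψ) (C := (M + M) * C) (by positivity) ?_
          filter_upwards [hbd, habd, hb] with ω h1 h2 h3
          exact abs_mul_le' (abs_sub_le'' h1.2.2.2.2.2.2.1 h2.2.2.1) h3
  -- composite nuisance functions
  set ψ2 : E → ℝ := fun x => t x * (c x / b x) / q x with hψ2def
  set ψ3 : E → ℝ := fun x => t x * (c x / b x) * (a x / b x) / (1 - q x) with hψ3def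
  have hψ2m : Measurable ψ2 := (htm.mul (hcm.div hbm)).div hqm
  have hψ3m : Measurable ψ3 :=
    ((htm.mul (hcm.div hbm)).mul (ham.div hbm)).div (measurable_const.sub hqm)
  have hψ2b : ∀ᵐ ω ∂P, |ψ2 (X ω)| ≤ M * Bε / ε := by
    filter_upwards [hbd, habd] with ω h1 h2
    refine abs_div_le' hε0 (le_trans h1.2.2.1 (le_abs_self _))
      (abs_mul_le' ?_ (abs_div_le' hε0 h2.1 h2.2.2.2.1))
    rw [abs_of_nonneg h2.2.2.2.2.1]; exact h2.2.2.2.2.2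
  have hψ3b : ∀ᵐ ω ∂P, |ψ3 (X ω)| ≤ M * Bε * Bε / ε := by
    filter_upwards [hbd, habd] with ω h1 h2
    have h1mq : ε ≤ |1 - q (X ω)| := le_trans (by linarith [h1.2.2.2.1]) (le_abs_self _)
    refine abs_div_le' hε0 h1mq
      (abs_mul_le' (abs_mul_le' ?_ (abs_div_le' hε0 h2.1 h2.2.2.2.1))
        (abs_div_le' hε0 h2.1 h2.2.1))
    rw [abs_of_nonneg h2.2.2.2.2.1]; exact h2.2.2.2.2.2
  -- step 1: pull out κ
  have EH1 : ∫ ω, H1 P X S A Y q a b c t ω ∂P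
      = κ * ∫ ω, ((1 - S ω) * (a (X ω) / b (X ω)) * Y ω +
          S ω * t (X ω) * (c (X ω) / b (X ω)) *
            (A ω / q (X ω) * (Y ω - a (X ω)) -
              (1 - A ω) / (1 - q (X ω)) * (a (X ω) / b (X ω)) * (Y ω - b (X ω)))) ∂P := by
    rw [hκdef]
    simp only [H1]
    rw [integral_const_mul]
  -- step 2: split the inner integral
  have i1 : Integrable (fun ω => (1 - S ω) * (a (X ω) / b (X ω) * Y ω)) P := by
    refine integ_bdd (C := 1 * (Bε * M))
      ((measurable_const.sub hS).mul
        (((ham.comp hX).div (hbm.comp hX)).mul hY)).aestronglyMeasurable ?_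
    filter_upwards [hab, hYb] with ω h1 h2
    exact abs_mul_le' (h1mSb ω) (abs_mul_le' h1 h2)
  have i2 : Integrable (fun ω => (S ω * A ω) * (ψ2 (X ω) * (Y ω - a (X ω)))) P := by
    refine integ_bdd (C := 1 * 1 * (M * Bε / ε * (M + M)))
      ((hS.mul hA).mul
        ((hψ2m.comp hX).mul (hY.sub (ham.comp hX)))).aestronglyMeasurable ?_
    filter_upwards [hψ2b, hYb, habd] with ω h1 h2 h3
    exact abs_mul_le' (abs_mul_le' (hSb ω) (hAb ω))
      (abs_mul_le' h1 (abs_sub_le'' h2 h3.2.1))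
  have i3 : Integrable (fun ω => (S ω * (1 - A ω)) * (ψ3 (X ω) * (Y ω - b (X ω)))) P := by
    refine integ_bdd (C := 1 * 1 * (M * Bε * Bε / ε * (M + M)))
      ((hS.mul (measurable_const.sub hA)).mul
        ((hψ3m.comp hX).mul (hY.sub (hbm.comp hX)))).aestronglyMeasurable ?_
    filter_upwards [hψ3b, hYb, habd] with ω h1 h2 h3
    exact abs_mul_le' (abs_mul_le' (hSb ω) (h1mAb ω))
      (abs_mul_le' h1 (abs_sub_le'' h2 h3.2.2.1))
  have Esplit : ∫ ω, ((1 - S ω) * (a (X ω) / b (X ω)) * Y ω +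
          S ω * t (X ω) * (c (X ω) / b (X ω)) *
            (A ω / q (X ω) * (Y ω - a (X ω)) -
              (1 - A ω) / (1 - q (X ω)) * (a (X ω) / b (X ω)) * (Y ω - b (X ω)))) ∂P
      = (∫ ω, (1 - S ω) * (a (X ω) / b (X ω) * Y ω) ∂P)
        + ((∫ ω, (S ω * A ω) * (ψ2 (X ω) * (Y ω - a (X ω))) ∂P)
          - ∫ ω, (S ω * (1 - A ω)) * (ψ3 (X ω) * (Y ω - b (X ω))) ∂P) := by
    have i23 : Integrable (fun ω => (S ω * A ω) * (ψ2 (X ω) * (Y ω - a (X ω)))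
        - (S ω * (1 - A ω)) * (ψ3 (X ω) * (Y ω - b (X ω)))) P := i2.sub i3
    calc ∫ ω, ((1 - S ω) * (a (X ω) / b (X ω)) * Y ω +
          S ω * t (X ω) * (c (X ω) / b (X ω)) *
            (A ω / q (X ω) * (Y ω - a (X ω)) -
              (1 - A ω) / (1 - q (X ω)) * (a (X ω) / b (X ω)) * (Y ω - b (X ω)))) ∂P
        = ∫ ω, ((1 - S ω) * (a (X ω) / b (X ω) * Y ω)
            + ((S ω * A ω) * (ψ2 (X ω) * (Y ω - a (X ω)))
              - (S ω * (1 - A ω)) * (ψ3 (X ω) * (Y ω - b (X ω))))) ∂P := by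
          refine integral_congr_ae (.of_forall fun ω => ?_)
          simp only [hψ2def, hψ3def]
          ring
      _ = (∫ ω, (1 - S ω) * (a (X ω) / b (X ω) * Y ω) ∂P)
          + ((∫ ω, (S ω * A ω) * (ψ2 (X ω) * (Y ω - a (X ω))) ∂P)
            - ∫ ω, (S ω * (1 - A ω)) * (ψ3 (X ω) * (Y ω - b (X ω))) ∂P) := by
          rw [integral_add i1 i23, integral_sub i2 i3]
  -- step 3: conditional expectation reductions of each piece
  have ET1 : ∫ ω, (1 - S ω) * (a (X ω) / b (X ω) * Y ω) ∂P
      = ∫ ω, (1 - g (X ω)) * (m0 (X ω) * (a (X ω) / b (X ω))) ∂P :=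
    keyY0 (φ := fun x => a x / b x) (ham.div hbm) hBε0.le hab
  have ET2 : ∫ ω, (S ω * A ω) * (ψ2 (X ω) * (Y ω - a (X ω))) ∂P
      = ∫ ω, g (X ω) * ((μ11 (X ω) - a (X ω)) * (t (X ω) * (c (X ω) / b (X ω)))) ∂P := by
    rw [keyY11 (ψ := ψ2) hψ2m (by positivity) hψ2b]
    refine integral_congr_ae ?_
    filter_upwards [hbd, habd] with ω h1 h2
    have hq0 : q (X ω) ≠ 0 := ne_of_gt (lt_of_lt_of_le hε0 h1.2.2.1)
    have hb0 : b (X ω) ≠ 0 := by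
      intro h; rw [h] at h2; simp at h2; linarith [h2.1]
    simp only [hψ2def]
    field_simp
  have ET3 : ∫ ω, (S ω * (1 - A ω)) * (ψ3 (X ω) * (Y ω - b (X ω))) ∂P
      = ∫ ω, g (X ω) * ((μ10 (X ω) - b (X ω)) *
          (t (X ω) * (c (X ω) / b (X ω)) * (a (X ω) / b (X ω)))) ∂P := by
    rw [keyY10 (ψ := ψ3) hψ3m (by positivity) hψ3b]
    refine integral_congr_ae ?_
    filter_upwards [hbd, habd] with ω h1 h2
    have hq1 : (1 : ℝ) - q (X ω) ≠ 0 := ne_of_gt (by linarith [h1.2.2.2.1])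
    have hb0 : b (X ω) ≠ 0 := by
      intro h; rw [h] at h2; simp at h2; linarith [h2.1]
    simp only [hψ3def]
    field_simp
  -- step 4: the α₁ term
  have Econd : condMean P (fun ω => μ11 (X ω) / μ10 (X ω) * Y ω) {ω | S ω = 0}
      = κ * ∫ ω, (1 - g (X ω)) * (m0 (X ω) * (μ11 (X ω) / μ10 (X ω))) ∂P := by
    rw [condMean, div_eq_inv_mul, ← hκdef]
    congr 1
    rw [ind0 (fun ω => μ11 (X ω) / μ10 (X ω) * Y ω)]
    exact keyY0 (φ := fun x => μ11 x / μ10 x) (hμ11m.div hμ10m) hBε0.le hμμ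
  -- step 5: the master identity
  set W : E → ℝ := fun x =>
    ((1 - g x) / g x * (m0 x / μ10 x) - t x * (c x / b x)) *
      ((a x - μ11 x) + a x / b x * (μ10 x - b x)) with hWdef
  have hWm : Measurable W :=
    ((((measurable_const.sub hgm).div hgm).mul (hm0m.div hμ10m)).sub
      (htm.mul (hcm.div hbm))).mul
      ((ham.sub hμ11m).add ((ham.div hbm).mul (hμ10m.sub hbm)))
  have f1i : Integrable (fun ω => (1 - g (X ω)) * (m0 (X ω) * (a (X ω) / b (X ω)))) P := by
    refine intX (φ := fun x => (1 - g x) * (m0 x * (a x / b x)))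
      ((measurable_const.sub hgm).mul (hm0m.mul (ham.div hbm))) (C := 1 * (M * Bε)) ?_
    filter_upwards [h1mgb, hbd, hab] with ω h1 h2 h3
    exact abs_mul_le' h1 (abs_mul_le' h2.2.2.2.2.2.2.2.1 h3)
  have f2i : Integrable
      (fun ω => g (X ω) * ((μ11 (X ω) - a (X ω)) * (t (X ω) * (c (X ω) / b (X ω))))) P := by
    refine intX (φ := fun x => g x * ((μ11 x - a x) * (t x * (c x / b x))))
      (hgm.mul ((hμ11m.sub ham).mul (htm.mul (hcm.div hbm))))
      (C := 1 * ((M + M) * (M * Bε))) ?_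
    filter_upwards [hgb, hbd, habd, htab, hcb] with ω h1 h2 h3 h4 h5
    exact abs_mul_le' h1
      (abs_mul_le' (abs_sub_le'' h2.2.2.2.2.2.1 h3.2.1) (abs_mul_le' h4 h5))
  have f3i : Integrable (fun ω => g (X ω) * ((μ10 (X ω) - b (X ω)) *
      (t (X ω) * (c (X ω) / b (X ω)) * (a (X ω) / b (X ω))))) P := by
    refine intX (φ := fun x => g x * ((μ10 x - b x) * (t x * (c x / b x) * (a x / b x))))
      (hgm.mul ((hμ10m.sub hbm).mul ((htm.mul (hcm.div hbm)).mul (ham.div hbm))))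
      (C := 1 * ((M + M) * (M * Bε * Bε))) ?_
    filter_upwards [hgb, hbd, habd, htab, hcb, hab] with ω h1 h2 h3 h4 h5 h6
    exact abs_mul_le' h1
      (abs_mul_le' (abs_sub_le'' h2.2.2.2.2.2.2.1 h3.2.2.1)
        (abs_mul_le' (abs_mul_le' h4 h5) h6))
  have f4i : Integrable
      (fun ω => (1 - g (X ω)) * (m0 (X ω) * (μ11 (X ω) / μ10 (X ω)))) P := by
    refine intX (φ := fun x => (1 - g x) * (m0 x * (μ11 x / μ10 x)))
      ((measurable_const.sub hgm).mul (hm0m.mul (hμ11m.div hμ10m))) (C := 1 * (M * Bε)) ?_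
    filter_upwards [h1mgb, hbd, hμμ] with ω h1 h2 h3
    exact abs_mul_le' h1 (abs_mul_le' h2.2.2.2.2.2.2.2.1 h3)
  have Ediff : (∫ ω, H1 P X S A Y q a b c t ω ∂P)
      - condMean P (fun ω => μ11 (X ω) / μ10 (X ω) * Y ω) {ω | S ω = 0}
      = κ * ∫ ω, g (X ω) * W (X ω) ∂P := by
    rw [EH1, Esplit, ET1, ET2, ET3, Econd, ← mul_sub]
    congr 1
    have i23 : Integrable (fun ω =>
        g (X ω) * ((μ11 (X ω) - a (X ω)) * (t (X ω) * (c (X ω) / b (X ω))))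
        - g (X ω) * ((μ10 (X ω) - b (X ω)) *
            (t (X ω) * (c (X ω) / b (X ω)) * (a (X ω) / b (X ω))))) P := f2i.sub f3i
    have i123 : Integrable (fun ω =>
        (1 - g (X ω)) * (m0 (X ω) * (a (X ω) / b (X ω)))
        + (g (X ω) * ((μ11 (X ω) - a (X ω)) * (t (X ω) * (c (X ω) / b (X ω))))
          - g (X ω) * ((μ10 (X ω) - b (X ω)) *
              (t (X ω) * (c (X ω) / b (X ω)) * (a (X ω) / b (X ω)))))) P := f1i.add i23
    refine Eq.symm ?_
    calc ∫ ω, g (X ω) * W (X ω) ∂P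
        = ∫ ω, ((1 - g (X ω)) * (m0 (X ω) * (a (X ω) / b (X ω)))
            + (g (X ω) * ((μ11 (X ω) - a (X ω)) * (t (X ω) * (c (X ω) / b (X ω))))
              - g (X ω) * ((μ10 (X ω) - b (X ω)) *
                  (t (X ω) * (c (X ω) / b (X ω)) * (a (X ω) / b (X ω)))))
            - (1 - g (X ω)) * (m0 (X ω) * (μ11 (X ω) / μ10 (X ω)))) ∂P := by
          refine integral_congr_ae ?_
          filter_upwards [hbd, habd] with ω h1 h2
          have hg0 : g (X ω) ≠ 0 := ne_of_gt (lt_of_lt_of_le hε0 h1.1)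
          have hb0 : b (X ω) ≠ 0 := by
            intro h; rw [h] at h2; simp at h2; linarith [h2.1]
          have hμ0 : μ10 (X ω) ≠ 0 := by
            intro h; rw [h] at h1; simp at h1; linarith [h1.2.2.2.2.1]
          simp only [hWdef]
          field_simp
          ring
      _ = (∫ ω, (1 - g (X ω)) * (m0 (X ω) * (a (X ω) / b (X ω))) ∂P)
          + ((∫ ω, g (X ω) * ((μ11 (X ω) - a (X ω)) *
              (t (X ω) * (c (X ω) / b (X ω)))) ∂P)
            - ∫ ω, g (X ω) * ((μ10 (X ω) - b (X ω)) *
                (t (X ω) * (c (X ω) / b (X ω)) * (a (X ω) / b (X ω)))) ∂P)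
          - ∫ ω, (1 - g (X ω)) * (m0 (X ω) * (μ11 (X ω) / μ10 (X ω))) ∂P := by
          rw [integral_sub i123 f4i, integral_add f1i i23, integral_sub f2i f3i]
  -- step 6: the bound
  have hGW : ∀ᵐ ω ∂P, |g (X ω) * W (X ω)| ≤
      Bε ^ 2 * ((|c (X ω) / b (X ω) - m0 (X ω) / μ10 (X ω)| +
          |t (X ω) - (1 - g (X ω)) / g (X ω)|) *
        (|a (X ω) - μ11 (X ω)| + |b (X ω) - μ10 (X ω)|)) := by
    filter_upwards [hbd, habd] with ω h1 h2
    have hg1 : |g (X ω)| ≤ 1 := by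
      rw [abs_le]; constructor <;> [linarith [h1.1]; linarith [h1.2.1]]
    have hτ : |(1 - g (X ω)) / g (X ω)| ≤ M := by
      have hg0 : 0 < g (X ω) := lt_of_lt_of_le hε0 h1.1
      rw [abs_of_nonneg (div_nonneg (by linarith [h1.2.1]) hg0.le)]
      exact h1.2.2.2.2.2.2.2.2.2
    have hr : |c (X ω) / b (X ω)| ≤ Bε := abs_div_le' hε0 h2.1 h2.2.2.2.1
    have hab' : |a (X ω) / b (X ω)| ≤ Bε := abs_div_le' hε0 h2.1 h2.2.1
    have hF : |(1 - g (X ω)) / g (X ω) * (m0 (X ω) / μ10 (X ω)) -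
        t (X ω) * (c (X ω) / b (X ω))| ≤
        Bε * (|c (X ω) / b (X ω) - m0 (X ω) / μ10 (X ω)| +
          |t (X ω) - (1 - g (X ω)) / g (X ω)|) := by
      have e : (1 - g (X ω)) / g (X ω) * (m0 (X ω) / μ10 (X ω)) -
          t (X ω) * (c (X ω) / b (X ω))
          = (1 - g (X ω)) / g (X ω) *
              (m0 (X ω) / μ10 (X ω) - c (X ω) / b (X ω)) +
            ((1 - g (X ω)) / g (X ω) - t (X ω)) * (c (X ω) / b (X ω)) := by ring
      rw [e]
      refine le_trans (abs_add_le _ _) ?_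
      have b1 : |(1 - g (X ω)) / g (X ω) *
          (m0 (X ω) / μ10 (X ω) - c (X ω) / b (X ω))| ≤
          M * |m0 (X ω) / μ10 (X ω) - c (X ω) / b (X ω)| := abs_mul_le' hτ le_rfl
      have b2 : |((1 - g (X ω)) / g (X ω) - t (X ω)) * (c (X ω) / b (X ω))| ≤
          |(1 - g (X ω)) / g (X ω) - t (X ω)| * Bε := abs_mul_le' le_rfl hr
      rw [abs_sub_comm (m0 (X ω) / μ10 (X ω))] at b1
      rw [abs_sub_comm ((1 - g (X ω)) / g (X ω))] at b2
      have := abs_nonneg (c (X ω) / b (X ω) - m0 (X ω) / μ10 (X ω))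
      have := abs_nonneg (t (X ω) - (1 - g (X ω)) / g (X ω))
      nlinarith [b1, b2]
    have hK : |(a (X ω) - μ11 (X ω)) + a (X ω) / b (X ω) * (μ10 (X ω) - b (X ω))| ≤
        Bε * (|a (X ω) - μ11 (X ω)| + |b (X ω) - μ10 (X ω)|) := by
      refine le_trans (abs_add_le _ _) ?_
      have b2 : |a (X ω) / b (X ω) * (μ10 (X ω) - b (X ω))| ≤
          Bε * |μ10 (X ω) - b (X ω)| := abs_mul_le' hab' le_rfl
      rw [abs_sub_comm (μ10 (X ω))] at b2
      have := abs_nonneg (a (X ω) - μ11 (X ω))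
      have := abs_nonneg (b (X ω) - μ10 (X ω))
      nlinarith [b2]
    have e1 : |W (X ω)| ≤ (Bε * (|c (X ω) / b (X ω) - m0 (X ω) / μ10 (X ω)| +
          |t (X ω) - (1 - g (X ω)) / g (X ω)|)) *
        (Bε * (|a (X ω) - μ11 (X ω)| + |b (X ω) - μ10 (X ω)|)) := by
      simp only [hWdef]
      rw [abs_mul]
      exact mul_le_mul hF hK (abs_nonneg _) (by positivity)
    calc |g (X ω) * W (X ω)| = |g (X ω)| * |W (X ω)| := abs_mul _ _
      _ ≤ 1 * ((Bε * (|c (X ω) / b (X ω) - m0 (X ω) / μ10 (X ω)| +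
            |t (X ω) - (1 - g (X ω)) / g (X ω)|)) *
          (Bε * (|a (X ω) - μ11 (X ω)| + |b (X ω) - μ10 (X ω)|))) :=
        mul_le_mul hg1 e1 (abs_nonneg _) one_pos.le
      _ = Bε ^ 2 * ((|c (X ω) / b (X ω) - m0 (X ω) / μ10 (X ω)| +
            |t (X ω) - (1 - g (X ω)) / g (X ω)|) *
          (|a (X ω) - μ11 (X ω)| + |b (X ω) - μ10 (X ω)|)) := by ring
  -- measurability of the pieces
  have hu1m : Measurable fun x => c x / b x - m0 x / μ10 x :=
    (hcm.div hbm).sub (hm0m.div hμ10m)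
  have hu2m : Measurable fun x => t x - (1 - g x) / g x :=
    htm.sub ((measurable_const.sub hgm).div hgm)
  have hv1m : Measurable fun x => a x - μ11 x := ham.sub hμ11m
  have hv2m : Measurable fun x => b x - μ10 x := hbm.sub hμ10m
  have hu1b : ∀ᵐ ω ∂P, |c (X ω) / b (X ω) - m0 (X ω) / μ10 (X ω)| ≤ Bε + Bε := by
    filter_upwards [hcb, hm0μ10] with ω h1 h2
    exact abs_sub_le'' h1 h2
  have hu2b : ∀ᵐ ω ∂P, |t (X ω) - (1 - g (X ω)) / g (X ω)| ≤ M + M := by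
    filter_upwards [htab, hτab] with ω h1 h2
    exact abs_sub_le'' h1 h2
  have hv1b : ∀ᵐ ω ∂P, |a (X ω) - μ11 (X ω)| ≤ M + M := by
    filter_upwards [habd, hbd] with ω h1 h2
    exact abs_sub_le'' h1.2.1 h2.2.2.2.2.2.1
  have hv2b : ∀ᵐ ω ∂P, |b (X ω) - μ10 (X ω)| ≤ M + M := by
    filter_upwards [habd, hbd] with ω h1 h2
    exact abs_sub_le'' h1.2.2.1 h2.2.2.2.2.2.2.1
  -- integrability for the monotonicity step
  have iΦ : Integrable (fun ω => Bε ^ 2 * ((|c (X ω) / b (X ω) - m0 (X ω) / μ10 (X ω)| +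
      |t (X ω) - (1 - g (X ω)) / g (X ω)|) *
      (|a (X ω) - μ11 (X ω)| + |b (X ω) - μ10 (X ω)|))) P := by
    refine intX (φ := fun x => Bε ^ 2 * ((|c x / b x - m0 x / μ10 x| +
        |t x - (1 - g x) / g x|) * (|a x - μ11 x| + |b x - μ10 x|)))
      (measurable_const.mul ((hu1m.abs.add hu2m.abs).mul (hv1m.abs.add hv2m.abs)))
      (C := Bε ^ 2 * (((Bε + Bε) + (M + M)) * ((M + M) + (M + M)))) ?_
    filter_upwards [hu1b, hu2b, hv1b, hv2b] with ω h1 h2 h3 h4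
    rw [abs_of_nonneg (by positivity)]
    refine mul_le_mul_of_nonneg_left ?_ (by positivity)
    refine mul_le_mul (add_le_add h1 h2) (add_le_add h3 h4) (by positivity) (by positivity)
  have iG : Integrable (fun ω => |g (X ω) * W (X ω)|) P := by
    refine intX (φ := fun x => |g x * W x|) (hgm.mul hWm).abs
      (C := Bε ^ 2 * (((Bε + Bε) + (M + M)) * ((M + M) + (M + M)))) ?_
    filter_upwards [hGW, hu1b, hu2b, hv1b, hv2b] with ω h0 h1 h2 h3 h4
    rw [abs_abs]
    refine le_trans h0 ?_
    refine mul_le_mul_of_nonneg_left ?_ (by positivity)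
    refine mul_le_mul (add_le_add h1 h2) (add_le_add h3 h4) (by positivity) (by positivity)
  -- integrable cross products
  have iuv : ∀ (u v : E → ℝ), Measurable u → Measurable v → ∀ {Cu Cv : ℝ},
      (∀ᵐ ω ∂P, |u (X ω)| ≤ Cu) → (∀ᵐ ω ∂P, |v (X ω)| ≤ Cv) →
      Integrable (fun ω => |u (X ω)| * |v (X ω)|) P := by
    intro u v hu hv Cu Cv hub hvb
    refine intX (φ := fun x => |u x| * |v x|) (hu.abs.mul hv.abs) (C := Cu * Cv) ?_
    filter_upwards [hub, hvb] with ω h1 h2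
    exact abs_mul_le' (by rwa [abs_abs]) (by rwa [abs_abs])
  have i11 := iuv _ _ hu1m hv1m hu1b hv1b
  have i12 := iuv _ _ hu1m hv2m hu1b hv2b
  have i21 := iuv _ _ hu2m hv1m hu2b hv1b
  have i22 := iuv _ _ hu2m hv2m hu2b hv2b
  -- Cauchy-Schwarz bounds
  have cs11 := cs_normX hX hu1m hv1m hu1b hv1b
  have cs12 := cs_normX hX hu1m hv2m hu1b hv2b
  have cs21 := cs_normX hX hu2m hv1m hu2b hv1b
  have cs22 := cs_normX hX hu2m hv2m hu2b hv2b
  -- final assembly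
  rw [Ediff, abs_mul, abs_of_pos hκ0]
  have habsint : |∫ ω, g (X ω) * W (X ω) ∂P| ≤ ∫ ω, |g (X ω) * W (X ω)| ∂P := by
    have h := norm_integral_le_integral_norm (μ := P) (fun ω => g (X ω) * W (X ω))
    simp only [Real.norm_eq_abs] at h
    exact h
  have hmono : ∫ ω, |g (X ω) * W (X ω)| ∂P ≤
      ∫ ω, Bε ^ 2 * ((|c (X ω) / b (X ω) - m0 (X ω) / μ10 (X ω)| +
        |t (X ω) - (1 - g (X ω)) / g (X ω)|) *
        (|a (X ω) - μ11 (X ω)| + |b (X ω) - μ10 (X ω)|)) ∂P :=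
    integral_mono_ae iG iΦ hGW
  have hexp : ∫ ω, Bε ^ 2 * ((|c (X ω) / b (X ω) - m0 (X ω) / μ10 (X ω)| +
        |t (X ω) - (1 - g (X ω)) / g (X ω)|) *
        (|a (X ω) - μ11 (X ω)| + |b (X ω) - μ10 (X ω)|)) ∂P
      = Bε ^ 2 * (((∫ ω, |c (X ω) / b (X ω) - m0 (X ω) / μ10 (X ω)| *
            |a (X ω) - μ11 (X ω)| ∂P)
          + ∫ ω, |c (X ω) / b (X ω) - m0 (X ω) / μ10 (X ω)| *
            |b (X ω) - μ10 (X ω)| ∂P)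
        + ((∫ ω, |t (X ω) - (1 - g (X ω)) / g (X ω)| * |a (X ω) - μ11 (X ω)| ∂P)
          + ∫ ω, |t (X ω) - (1 - g (X ω)) / g (X ω)| * |b (X ω) - μ10 (X ω)| ∂P)) := by
    rw [integral_const_mul]
    congr 1
    have i1112 : Integrable (fun ω =>
        |c (X ω) / b (X ω) - m0 (X ω) / μ10 (X ω)| * |a (X ω) - μ11 (X ω)|
        + |c (X ω) / b (X ω) - m0 (X ω) / μ10 (X ω)| * |b (X ω) - μ10 (X ω)|) P :=
      i11.add i12
    have i2122 : Integrable (fun ω =>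
        |t (X ω) - (1 - g (X ω)) / g (X ω)| * |a (X ω) - μ11 (X ω)|
        + |t (X ω) - (1 - g (X ω)) / g (X ω)| * |b (X ω) - μ10 (X ω)|) P :=
      i21.add i22
    calc ∫ ω, ((|c (X ω) / b (X ω) - m0 (X ω) / μ10 (X ω)| +
          |t (X ω) - (1 - g (X ω)) / g (X ω)|) *
          (|a (X ω) - μ11 (X ω)| + |b (X ω) - μ10 (X ω)|)) ∂P
        = ∫ ω, ((|c (X ω) / b (X ω) - m0 (X ω) / μ10 (X ω)| * |a (X ω) - μ11 (X ω)|
            + |c (X ω) / b (X ω) - m0 (X ω) / μ10 (X ω)| * |b (X ω) - μ10 (X ω)|)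
            + (|t (X ω) - (1 - g (X ω)) / g (X ω)| * |a (X ω) - μ11 (X ω)|
              + |t (X ω) - (1 - g (X ω)) / g (X ω)| * |b (X ω) - μ10 (X ω)|)) ∂P := by
          refine integral_congr_ae (.of_forall fun ω => ?_)
          ring
      _ = _ := by
          rw [integral_add i1112 i2122, integral_add i11 i12, integral_add i21 i22]
  refine le_trans
    (mul_le_mul_of_nonneg_left (le_trans habsint (le_trans hmono hexp.le)) hκ0.le) ?_
  calc κ * (Bε ^ 2 * (((∫ ω, |c (X ω) / b (X ω) - m0 (X ω) / μ10 (X ω)| *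
            |a (X ω) - μ11 (X ω)| ∂P)
          + ∫ ω, |c (X ω) / b (X ω) - m0 (X ω) / μ10 (X ω)| *
            |b (X ω) - μ10 (X ω)| ∂P)
        + ((∫ ω, |t (X ω) - (1 - g (X ω)) / g (X ω)| * |a (X ω) - μ11 (X ω)| ∂P)
          + ∫ ω, |t (X ω) - (1 - g (X ω)) / g (X ω)| * |b (X ω) - μ10 (X ω)| ∂P)))
      ≤ κ * (Bε ^ 2 * ((normX P X (fun x => c x / b x - m0 x / μ10 x) *
            normX P X (fun x => a x - μ11 x)
          + normX P X (fun x => c x / b x - m0 x / μ10 x) *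
            normX P X (fun x => b x - μ10 x))
        + (normX P X (fun x => t x - (1 - g x) / g x) * normX P X (fun x => a x - μ11 x)
          + normX P X (fun x => t x - (1 - g x) / g x) *
            normX P X (fun x => b x - μ10 x)))) := by
        refine mul_le_mul_of_nonneg_left (mul_le_mul_of_nonneg_left ?_ (by positivity)) hκ0.le
        exact add_le_add (add_le_add cs11 cs12) (add_le_add cs21 cs22)
    _ = κ * Bε ^ 2 * (normX P X (fun x => a x - μ11 x) + normX P X (fun x => b x - μ10 x)) *
        (normX P X (fun x => c x / b x - m0 x / μ10 x) +
          normX P X (fun x => t x - (1 - g x) / g x)) := by ring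
end

section
/- Model double robustness in Scenario 1 (Section 2.4): for admissible nuisance candidates μ̃₁₁, μ̃₁₀, μ̃₀₀, τ̃, if either (a) μ̃₁₁/μ̃₁₀ = μ₁₁/μ₁₀ holds P∘X⁻¹-a.e., or (b) μ̃₀₀ = m₀, μ̃₁₀ = μ₁₀ and τ̃ = τ hold P∘X⁻¹-a.e., then E[ H₁(μ̃₁₁, μ̃₁₀, μ̃₀₀, τ̃) ] = α₁. -/
open MeasureTheory

private lemma mul_bound' {a b A B : ℝ} (ha : |a| ≤ A) (hb : |b| ≤ B) : |a * b| ≤ A * B := by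
  rw [abs_mul]
  exact mul_le_mul ha hb (abs_nonneg _) ((abs_nonneg a).trans ha)

private lemma div_bound' {a b A ε : ℝ} (hε : 0 < ε) (ha : |a| ≤ A) (hb : ε ≤ |b|) :
    |a / b| ≤ A / ε := by
  rw [abs_div]
  exact div_le_div₀ ((abs_nonneg a).trans ha) ha hε hb

private lemma sub_bound' {a b A B : ℝ} (ha : |a| ≤ A) (hb : |b| ≤ B) : |a - b| ≤ A + B :=
  (abs_sub a b).trans (add_le_add ha hb)

private lemma intOfBound {Ω : Type*} [MeasurableSpace Ω] {P : Measure Ω} [IsFiniteMeasure P]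
    {f : Ω → ℝ} (hf : Measurable f) (C : ℝ) (h : ∀ᵐ ω ∂P, |f ω| ≤ C) : Integrable f P :=
  (integrable_const C).mono' hf.aestronglyMeasurable (by simpa [Real.norm_eq_abs] using h)

private lemma ver' {Ω E : Type*} [MeasurableSpace Ω] [MeasurableSpace E]
    {P : Measure Ω} {X : Ω → E} {Z : Ω → ℝ} {B : Set Ω} {m : E → ℝ}
    (hver : IsVersion P X Z B m) (h : E → ℝ) (hh : Measurable h)
    {C : ℝ} (hC : 0 ≤ C) (hbh : ∀ᵐ ω ∂P, |h (X ω)| ≤ C) :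
    ∫ ω in B, Z ω * h (X ω) ∂P = ∫ ω in B, m (X ω) * h (X ω) ∂P := by
  set h' : E → ℝ := fun x => max (-C) (min C (h x)) with hh'def
  have hh' : Measurable h' := measurable_const.max (measurable_const.min hh)
  have hb' : ∀ x, |h' x| ≤ C := fun x =>
    abs_le.2 ⟨le_max_left _ _, max_le (by linarith) (min_le_left _ _)⟩
  have heq := hver.2 h' hh' ⟨C, hb'⟩
  have hae : ∀ᵐ ω ∂P, h' (X ω) = h (X ω) := by
    filter_upwards [hbh] with ω hb
    have h1 := (abs_le.1 hb).1
    have h2 := (abs_le.1 hb).2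
    simp only [hh'def]
    rw [min_eq_right h2, max_eq_right h1]
  calc ∫ ω in B, Z ω * h (X ω) ∂P = ∫ ω in B, Z ω * h' (X ω) ∂P := by
        refine integral_congr_ae (ae_restrict_of_ae ?_)
        filter_upwards [hae] with ω e
        rw [e]
    _ = ∫ ω in B, m (X ω) * h' (X ω) ∂P := heq
    _ = ∫ ω in B, m (X ω) * h (X ω) ∂P := by
        refine integral_congr_ae (ae_restrict_of_ae ?_)
        filter_upwards [hae] with ω e
        rw [e]

private lemma cond_shift {Ω E : Type*} [MeasurableSpace Ω] [MeasurableSpace E]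
    {P : Measure Ω} [IsProbabilityMeasure P] {X : Ω → E} {Z : Ω → ℝ} {B : Set Ω}
    {m : E → ℝ} (hver : IsVersion P X Z B m) (hX : Measurable X) (hZ : Measurable Z)
    (h k : E → ℝ) (hh : Measurable h) (hk : Measurable k)
    {CZ Ch Ck Cm : ℝ} (hCh : 0 ≤ Ch)
    (hbZ : ∀ᵐ ω ∂P, |Z ω| ≤ CZ) (hbh : ∀ᵐ ω ∂P, |h (X ω)| ≤ Ch)
    (hbk : ∀ᵐ ω ∂P, |k (X ω)| ≤ Ck) (hbm : ∀ᵐ ω ∂P, |m (X ω)| ≤ Cm) :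
    ∫ ω in B, (Z ω - k (X ω)) * h (X ω) ∂P
      = ∫ ω in B, (m (X ω) - k (X ω)) * h (X ω) ∂P := by
  have iZ : Integrable (fun ω => Z ω * h (X ω)) (P.restrict B) :=
    (intOfBound (hZ.mul (hh.comp hX)) (CZ * Ch)
      (by filter_upwards [hbZ, hbh] with ω h1 h2; exact mul_bound' h1 h2)).restrict
  have ik : Integrable (fun ω => k (X ω) * h (X ω)) (P.restrict B) :=
    (intOfBound ((hk.comp hX).mul (hh.comp hX)) (Ck * Ch)
      (by filter_upwards [hbk, hbh] with ω h1 h2; exact mul_bound' h1 h2)).restrict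
  have im : Integrable (fun ω => m (X ω) * h (X ω)) (P.restrict B) :=
    (intOfBound ((hver.1.comp hX).mul (hh.comp hX)) (Cm * Ch)
      (by filter_upwards [hbm, hbh] with ω h1 h2; exact mul_bound' h1 h2)).restrict
  have e1 : ∫ ω in B, (Z ω - k (X ω)) * h (X ω) ∂P
      = (∫ ω in B, Z ω * h (X ω) ∂P) - ∫ ω in B, k (X ω) * h (X ω) ∂P := by
    rw [← integral_sub iZ ik]
    exact integral_congr_ae (ae_of_all _ fun ω => by ring)
  have e2 : ∫ ω in B, (m (X ω) - k (X ω)) * h (X ω) ∂P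
      = (∫ ω in B, m (X ω) * h (X ω) ∂P) - ∫ ω in B, k (X ω) * h (X ω) ∂P := by
    rw [← integral_sub im ik]
    exact integral_congr_ae (ae_of_all _ fun ω => by ring)
  rw [e1, e2, ver' hver h hh hCh hbh]

private lemma weight_integral {Ω : Type*} [MeasurableSpace Ω] (P : Measure Ω)
    {B : Set Ω} (hB : MeasurableSet B) (w f : Ω → ℝ)
    (hw1 : ∀ ω ∈ B, w ω = 1) (hw0 : ∀ ω ∉ B, w ω = 0) :
    ∫ ω, w ω * f ω ∂P = ∫ ω in B, f ω ∂P := by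
  rw [← integral_indicator hB]
  refine integral_congr_ae (ae_of_all _ fun ω => ?_)
  by_cases h : ω ∈ B
  · simp [Set.indicator_of_mem h, hw1 ω h]
  · simp [Set.indicator_of_notMem h, hw0 ω h]

set_option maxHeartbeats 3200000 in
/-- Model double robustness in Scenario 1 (Section 2.4): for admissible nuisance
candidates, if either (a) `μ̃₁₁/μ̃₁₀ = μ₁₁/μ₁₀` a.e. or (b) `μ̃₀₀ = m₀`, `μ̃₁₀ = μ₁₀`
and `τ̃ = τ` a.e. (with `τ = (1−g)/g`), then `E[H₁(μ̃₁₁,μ̃₁₀,μ̃₀₀,τ̃)] = α₁`. -/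
theorem H1_model_double_robustness
    {Ω E : Type*} [MeasurableSpace Ω] [MeasurableSpace E]
    (P : Measure Ω) [IsProbabilityMeasure P]
    (X : Ω → E) (S A Y : Ω → ℝ)
    (hX : Measurable X) (hS : Measurable S) (hA : Measurable A) (hY : Measurable Y)
    (hS01 : ∀ ω, S ω = 0 ∨ S ω = 1) (hA01 : ∀ ω, A ω = 0 ∨ A ω = 1)
    (hPS0 : 0 < P {ω | S ω = 0})
    (hPS1A1 : 0 < P {ω | S ω = 1 ∧ A ω = 1})
    (hPS1A0 : 0 < P {ω | S ω = 1 ∧ A ω = 0})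
    (μ11 μ10 m0 g q : E → ℝ)
    (hμ11 : IsVersion P X Y {ω | S ω = 1 ∧ A ω = 1} μ11)
    (hμ10 : IsVersion P X Y {ω | S ω = 1 ∧ A ω = 0} μ10)
    (hm0 : IsVersion P X Y {ω | S ω = 0} m0)
    (hg : IsVersion P X S Set.univ g)
    (hq : IsVersion P X A {ω | S ω = 1} q)
    (ε M : ℝ) (hε0 : 0 < ε) (hε1 : ε < 1) (hM : 1 ≤ M)
    (hbd : ∀ᵐ ω ∂P,
      ε ≤ g (X ω) ∧ g (X ω) ≤ 1 - ε ∧ ε ≤ q (X ω) ∧ q (X ω) ≤ 1 - ε ∧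
      ε ≤ |μ10 (X ω)| ∧ |μ11 (X ω)| ≤ M ∧ |μ10 (X ω)| ≤ M ∧ |m0 (X ω)| ≤ M ∧
      |Y ω| ≤ M ∧ (1 - g (X ω)) / g (X ω) ≤ M)
    (htruth : Admissible1 P X ε M μ11 μ10 m0 (fun x => (1 - g x) / g x))
    :
    ∀ m11 m10 m00 t : E → ℝ, Admissible1 P X ε M m11 m10 m00 t →
      ((∀ᵐ ω ∂P, m11 (X ω) / m10 (X ω) = μ11 (X ω) / μ10 (X ω)) ∨
        (∀ᵐ ω ∂P, m00 (X ω) = m0 (X ω) ∧ m10 (X ω) = μ10 (X ω) ∧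
          t (X ω) = (1 - g (X ω)) / g (X ω))) →
      ∫ ω, H1 P X S A Y q m11 m10 m00 t ω ∂P
        = condMean P (fun ω => μ11 (X ω) / μ10 (X ω) * Y ω) {ω | S ω = 0} := by
  intro n11 n10 n00 nt hadm hcase
  obtain ⟨mn11, mn10, mn00, mnt, hnae⟩ := hadm
  have mμ11 := hμ11.1
  have mμ10 := hμ10.1
  have mm0 := hm0.1
  have mg := hg.1
  have mq := hq.1
  have hM0 : (0:ℝ) < M := lt_of_lt_of_le one_pos hM
  -- measurable sets
  have hB0 : MeasurableSet {ω | S ω = 0} := hS (measurableSet_singleton 0)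
  have hB1 : MeasurableSet {ω | S ω = 1} := hS (measurableSet_singleton 1)
  have hB11 : MeasurableSet {ω | S ω = 1 ∧ A ω = 1} :=
    (hS (measurableSet_singleton 1)).inter (hA (measurableSet_singleton 1))
  have hB10 : MeasurableSet {ω | S ω = 1 ∧ A ω = 0} :=
    (hS (measurableSet_singleton 1)).inter (hA (measurableSet_singleton 0))
  -- pointwise bounds for S, A
  have hSa : ∀ ω, |S ω| ≤ 1 := fun ω => by rcases hS01 ω with h | h <;> simp [h]
  have hS1a : ∀ ω, |1 - S ω| ≤ 1 := fun ω => by rcases hS01 ω with h | h <;> simp [h]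
  have hAa : ∀ ω, |A ω| ≤ 1 := fun ω => by rcases hA01 ω with h | h <;> simp [h]
  have hA1a : ∀ ω, |1 - A ω| ≤ 1 := fun ω => by rcases hA01 ω with h | h <;> simp [h]
  -- abbreviations
  set f1 : E → ℝ := fun x => nt x * (n00 x / n10 x) / q x with hf1
  set f2 : E → ℝ := fun x => nt x * (n00 x / n10 x) * (n11 x / n10 x) / (1 - q x) with hf2
  have mf1 : Measurable f1 := by rw [hf1]; exact (mnt.mul (mn00.div mn10)).div mq
  have mf2 : Measurable f2 := by
    rw [hf2]; exact ((mnt.mul (mn00.div mn10)).mul (mn11.div mn10)).div (measurable_const.sub mq)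
  -- nonnegative constants
  have hKε : (0:ℝ) ≤ M / ε := (div_pos hM0 hε0).le
  have hF1 : (0:ℝ) ≤ M * (M / ε) / ε := div_nonneg (mul_nonneg hM0.le hKε) hε0.le
  have hF2 : (0:ℝ) ≤ M * (M / ε) * (M / ε) / ε :=
    div_nonneg (mul_nonneg (mul_nonneg hM0.le hKε) hKε) hε0.le
  have hG1b : (0:ℝ) ≤ (M + M) * (M * (M / ε) / ε) :=
    mul_nonneg (by linarith) hF1
  have hG2b : (0:ℝ) ≤ (M + M) * (M * (M / ε) * (M / ε) / ε) :=
    mul_nonneg (by linarith) hF2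
  have hψb : (0:ℝ) ≤ M * (M / ε + M / ε) := mul_nonneg hM0.le (by linarith)
  -- master a.e. bounds
  have master : ∀ᵐ ω ∂P,
      |(1 - S ω) * (n11 (X ω) / n10 (X ω) * Y ω)| ≤ 1 * (M / ε * M) ∧
      |S ω * A ω * (f1 (X ω) * (Y ω - n11 (X ω)))| ≤ 1 * 1 * (M * (M / ε) / ε * (M + M)) ∧
      |S ω * (1 - A ω) * (f2 (X ω) * (Y ω - n10 (X ω)))|
        ≤ 1 * 1 * (M * (M / ε) * (M / ε) / ε * (M + M)) ∧
      |Y ω| ≤ M ∧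
      |f1 (X ω)| ≤ M * (M / ε) / ε ∧
      |f2 (X ω)| ≤ M * (M / ε) * (M / ε) / ε ∧
      |n11 (X ω)| ≤ M ∧
      |μ11 (X ω)| ≤ M ∧
      |n10 (X ω)| ≤ M ∧
      |μ10 (X ω)| ≤ M ∧
      |(μ11 (X ω) - n11 (X ω)) * f1 (X ω)| ≤ (M + M) * (M * (M / ε) / ε) ∧
      |(μ10 (X ω) - n10 (X ω)) * f2 (X ω)| ≤ (M + M) * (M * (M / ε) * (M / ε) / ε) ∧
      |A ω * ((μ10 (X ω) - n10 (X ω)) * f2 (X ω))|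
        ≤ 1 * ((M + M) * (M * (M / ε) * (M / ε) / ε)) ∧
      |q (X ω) * ((μ11 (X ω) - n11 (X ω)) * f1 (X ω))|
        ≤ 1 * ((M + M) * (M * (M / ε) / ε)) ∧
      |q (X ω) * ((μ10 (X ω) - n10 (X ω)) * f2 (X ω))|
        ≤ 1 * ((M + M) * (M * (M / ε) * (M / ε) / ε)) ∧
      |(1 - q (X ω)) * ((μ10 (X ω) - n10 (X ω)) * f2 (X ω))|
        ≤ 1 * ((M + M) * (M * (M / ε) * (M / ε) / ε)) ∧
      |μ11 (X ω) / μ10 (X ω) - n11 (X ω) / n10 (X ω)| ≤ M / ε + M / ε ∧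
      |(μ11 (X ω) / μ10 (X ω) - n11 (X ω) / n10 (X ω)) * Y ω| ≤ (M / ε + M / ε) * M ∧
      |m0 (X ω) * (μ11 (X ω) / μ10 (X ω) - n11 (X ω) / n10 (X ω))| ≤ M * (M / ε + M / ε) ∧
      |S ω * (m0 (X ω) * (μ11 (X ω) / μ10 (X ω) - n11 (X ω) / n10 (X ω)))|
        ≤ 1 * (M * (M / ε + M / ε)) ∧
      |g (X ω) * (m0 (X ω) * (μ11 (X ω) / μ10 (X ω) - n11 (X ω) / n10 (X ω)))|
        ≤ 1 * (M * (M / ε + M / ε)) ∧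
      |(1 - g (X ω)) / g (X ω) *
          (m0 (X ω) * (μ11 (X ω) / μ10 (X ω) - n11 (X ω) / n10 (X ω)))|
        ≤ M * (M * (M / ε + M / ε)) ∧
      (ε ≤ q (X ω) ∧ q (X ω) ≤ 1 - ε ∧ ε ≤ |n10 (X ω)| ∧ ε ≤ |μ10 (X ω)| ∧
        ε ≤ g (X ω)) ∧
      |n11 (X ω) / n10 (X ω)| ≤ M / ε := by
    filter_upwards [hbd, hnae] with ω h1 h2
    obtain ⟨bg1, bg2, bq1, bq2, bμ10e, bμ11, bμ10, bm0, bY, bτ⟩ := h1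
    obtain ⟨bn10e, bn11, bn10, bn00, bnt0, bnt⟩ := h2
    have bntA : |nt (X ω)| ≤ M := abs_le.2 ⟨by linarith, bnt⟩
    have bqA : ε ≤ |q (X ω)| := by rw [abs_of_nonneg (by linarith)]; exact bq1
    have b1qA : ε ≤ |1 - q (X ω)| := by rw [abs_of_nonneg (by linarith)]; linarith
    have bq1' : |q (X ω)| ≤ 1 := by rw [abs_of_nonneg (by linarith)]; linarith
    have b1q1' : |1 - q (X ω)| ≤ 1 := by rw [abs_of_nonneg (by linarith)]; linarith
    have bg1' : |g (X ω)| ≤ 1 := by rw [abs_of_nonneg (by linarith)]; linarith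
    have bτA : |(1 - g (X ω)) / g (X ω)| ≤ M := by
      rw [abs_of_nonneg (div_nonneg (by linarith) (by linarith))]; exact bτ
    have brt : |n11 (X ω) / n10 (X ω)| ≤ M / ε := div_bound' hε0 bn11 bn10e
    have br : |μ11 (X ω) / μ10 (X ω)| ≤ M / ε := div_bound' hε0 bμ11 bμ10e
    have bf1 : |f1 (X ω)| ≤ M * (M / ε) / ε := by
      rw [hf1]; exact div_bound' hε0 (mul_bound' bntA (div_bound' hε0 bn00 bn10e)) bqA
    have bf2 : |f2 (X ω)| ≤ M * (M / ε) * (M / ε) / ε := by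
      rw [hf2]
      exact div_bound' hε0
        (mul_bound' (mul_bound' bntA (div_bound' hε0 bn00 bn10e)) brt) b1qA
    have bYn11 : |Y ω - n11 (X ω)| ≤ M + M := sub_bound' bY bn11
    have bYn10 : |Y ω - n10 (X ω)| ≤ M + M := sub_bound' bY bn10
    have bG1 : |(μ11 (X ω) - n11 (X ω)) * f1 (X ω)| ≤ (M + M) * (M * (M / ε) / ε) :=
      mul_bound' (sub_bound' bμ11 bn11) bf1
    have bG2 : |(μ10 (X ω) - n10 (X ω)) * f2 (X ω)|
        ≤ (M + M) * (M * (M / ε) * (M / ε) / ε) :=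
      mul_bound' (sub_bound' bμ10 bn10) bf2
    have bdd : |μ11 (X ω) / μ10 (X ω) - n11 (X ω) / n10 (X ω)| ≤ M / ε + M / ε :=
      sub_bound' br brt
    have bψ : |m0 (X ω) * (μ11 (X ω) / μ10 (X ω) - n11 (X ω) / n10 (X ω))|
        ≤ M * (M / ε + M / ε) := mul_bound' bm0 bdd
    refine ⟨mul_bound' (hS1a ω) (mul_bound' brt bY),
      mul_bound' (mul_bound' (hSa ω) (hAa ω)) (mul_bound' bf1 bYn11),
      mul_bound' (mul_bound' (hSa ω) (hA1a ω)) (mul_bound' bf2 bYn10),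
      bY, bf1, bf2, bn11, bμ11, bn10, bμ10, bG1, bG2,
      mul_bound' (hAa ω) bG2, mul_bound' bq1' bG1, mul_bound' bq1' bG2,
      mul_bound' b1q1' bG2, bdd, mul_bound' bdd bY, bψ,
      mul_bound' (hSa ω) bψ, mul_bound' bg1' bψ, mul_bound' bτA bψ,
      ⟨bq1, bq2, bn10e, bμ10e, bg1⟩, brt⟩
  -- named projections
  have b1 : ∀ᵐ ω ∂P, |(1 - S ω) * (n11 (X ω) / n10 (X ω) * Y ω)| ≤ 1 * (M / ε * M) := by
    filter_upwards [master] with ω h; exact h.1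
  have b2 : ∀ᵐ ω ∂P,
      |S ω * A ω * (f1 (X ω) * (Y ω - n11 (X ω)))| ≤ 1 * 1 * (M * (M / ε) / ε * (M + M)) := by
    filter_upwards [master] with ω h; exact h.2.1
  have b3 : ∀ᵐ ω ∂P, |S ω * (1 - A ω) * (f2 (X ω) * (Y ω - n10 (X ω)))|
      ≤ 1 * 1 * (M * (M / ε) * (M / ε) / ε * (M + M)) := by
    filter_upwards [master] with ω h; exact h.2.2.1
  have b4 : ∀ᵐ ω ∂P, |Y ω| ≤ M := by
    filter_upwards [master] with ω h; exact h.2.2.2.1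
  have b5 : ∀ᵐ ω ∂P, |f1 (X ω)| ≤ M * (M / ε) / ε := by
    filter_upwards [master] with ω h; exact h.2.2.2.2.1
  have b6 : ∀ᵐ ω ∂P, |f2 (X ω)| ≤ M * (M / ε) * (M / ε) / ε := by
    filter_upwards [master] with ω h; exact h.2.2.2.2.2.1
  have b7 : ∀ᵐ ω ∂P, |n11 (X ω)| ≤ M := by
    filter_upwards [master] with ω h; exact h.2.2.2.2.2.2.1
  have b8 : ∀ᵐ ω ∂P, |μ11 (X ω)| ≤ M := by
    filter_upwards [master] with ω h; exact h.2.2.2.2.2.2.2.1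
  have b9 : ∀ᵐ ω ∂P, |n10 (X ω)| ≤ M := by
    filter_upwards [master] with ω h; exact h.2.2.2.2.2.2.2.2.1
  have b10 : ∀ᵐ ω ∂P, |μ10 (X ω)| ≤ M := by
    filter_upwards [master] with ω h; exact h.2.2.2.2.2.2.2.2.2.1
  have b11 : ∀ᵐ ω ∂P,
      |(μ11 (X ω) - n11 (X ω)) * f1 (X ω)| ≤ (M + M) * (M * (M / ε) / ε) := by
    filter_upwards [master] with ω h; exact h.2.2.2.2.2.2.2.2.2.2.1
  have b12 : ∀ᵐ ω ∂P, |(μ10 (X ω) - n10 (X ω)) * f2 (X ω)|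
      ≤ (M + M) * (M * (M / ε) * (M / ε) / ε) := by
    filter_upwards [master] with ω h; exact h.2.2.2.2.2.2.2.2.2.2.2.1
  have b13 : ∀ᵐ ω ∂P, |A ω * ((μ10 (X ω) - n10 (X ω)) * f2 (X ω))|
      ≤ 1 * ((M + M) * (M * (M / ε) * (M / ε) / ε)) := by
    filter_upwards [master] with ω h; exact h.2.2.2.2.2.2.2.2.2.2.2.2.1
  have b14 : ∀ᵐ ω ∂P, |q (X ω) * ((μ11 (X ω) - n11 (X ω)) * f1 (X ω))|
      ≤ 1 * ((M + M) * (M * (M / ε) / ε)) := by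
    filter_upwards [master] with ω h; exact h.2.2.2.2.2.2.2.2.2.2.2.2.2.1
  have b15 : ∀ᵐ ω ∂P, |q (X ω) * ((μ10 (X ω) - n10 (X ω)) * f2 (X ω))|
      ≤ 1 * ((M + M) * (M * (M / ε) * (M / ε) / ε)) := by
    filter_upwards [master] with ω h; exact h.2.2.2.2.2.2.2.2.2.2.2.2.2.2.1
  have b16 : ∀ᵐ ω ∂P, |(1 - q (X ω)) * ((μ10 (X ω) - n10 (X ω)) * f2 (X ω))|
      ≤ 1 * ((M + M) * (M * (M / ε) * (M / ε) / ε)) := by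
    filter_upwards [master] with ω h; exact h.2.2.2.2.2.2.2.2.2.2.2.2.2.2.2.1
  have b17 : ∀ᵐ ω ∂P,
      |μ11 (X ω) / μ10 (X ω) - n11 (X ω) / n10 (X ω)| ≤ M / ε + M / ε := by
    filter_upwards [master] with ω h; exact h.2.2.2.2.2.2.2.2.2.2.2.2.2.2.2.2.1
  have b18 : ∀ᵐ ω ∂P,
      |(μ11 (X ω) / μ10 (X ω) - n11 (X ω) / n10 (X ω)) * Y ω| ≤ (M / ε + M / ε) * M := by
    filter_upwards [master] with ω h; exact h.2.2.2.2.2.2.2.2.2.2.2.2.2.2.2.2.2.1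
  have b19 : ∀ᵐ ω ∂P,
      |m0 (X ω) * (μ11 (X ω) / μ10 (X ω) - n11 (X ω) / n10 (X ω))|
        ≤ M * (M / ε + M / ε) := by
    filter_upwards [master] with ω h; exact h.2.2.2.2.2.2.2.2.2.2.2.2.2.2.2.2.2.2.1
  have b20 : ∀ᵐ ω ∂P,
      |S ω * (m0 (X ω) * (μ11 (X ω) / μ10 (X ω) - n11 (X ω) / n10 (X ω)))|
        ≤ 1 * (M * (M / ε + M / ε)) := by
    filter_upwards [master] with ω h; exact h.2.2.2.2.2.2.2.2.2.2.2.2.2.2.2.2.2.2.2.1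
  have b21 : ∀ᵐ ω ∂P,
      |g (X ω) * (m0 (X ω) * (μ11 (X ω) / μ10 (X ω) - n11 (X ω) / n10 (X ω)))|
        ≤ 1 * (M * (M / ε + M / ε)) := by
    filter_upwards [master] with ω h; exact h.2.2.2.2.2.2.2.2.2.2.2.2.2.2.2.2.2.2.2.2.1
  have b22 : ∀ᵐ ω ∂P,
      |(1 - g (X ω)) / g (X ω) *
        (m0 (X ω) * (μ11 (X ω) / μ10 (X ω) - n11 (X ω) / n10 (X ω)))|
        ≤ M * (M * (M / ε + M / ε)) := by
    filter_upwards [master] with ω h; exact h.2.2.2.2.2.2.2.2.2.2.2.2.2.2.2.2.2.2.2.2.2.1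
  have b23 : ∀ᵐ ω ∂P, ε ≤ q (X ω) ∧ q (X ω) ≤ 1 - ε ∧ ε ≤ |n10 (X ω)| ∧
      ε ≤ |μ10 (X ω)| ∧ ε ≤ g (X ω) := by
    filter_upwards [master] with ω h; exact h.2.2.2.2.2.2.2.2.2.2.2.2.2.2.2.2.2.2.2.2.2.2.1
  have b24 : ∀ᵐ ω ∂P, |n11 (X ω) / n10 (X ω)| ≤ M / ε := by
    filter_upwards [master] with ω h; exact h.2.2.2.2.2.2.2.2.2.2.2.2.2.2.2.2.2.2.2.2.2.2.2
  -- global integrability of the three pieces of H1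
  have int1 : Integrable (fun ω => (1 - S ω) * (n11 (X ω) / n10 (X ω) * Y ω)) P :=
    intOfBound ((measurable_const.sub hS).mul
      (((mn11.comp hX).div (mn10.comp hX)).mul hY)) _ b1
  have int2 : Integrable (fun ω => S ω * A ω * (f1 (X ω) * (Y ω - n11 (X ω)))) P :=
    intOfBound ((hS.mul hA).mul ((mf1.comp hX).mul (hY.sub (mn11.comp hX)))) _ b2
  have int3 : Integrable (fun ω => S ω * (1 - A ω) * (f2 (X ω) * (Y ω - n10 (X ω)))) P :=
    intOfBound ((hS.mul (measurable_const.sub hA)).mul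
      ((mf2.comp hX).mul (hY.sub (mn10.comp hX)))) _ b3
  -- step 1 : expand H1
  have hH1 : ∫ ω, H1 P X S A Y q n11 n10 n00 nt ω ∂P
      = (P {ω' | S ω' = 0}).toReal⁻¹ *
        ((∫ ω, (1 - S ω) * (n11 (X ω) / n10 (X ω) * Y ω) ∂P) +
          ((∫ ω, S ω * A ω * (f1 (X ω) * (Y ω - n11 (X ω))) ∂P) -
            ∫ ω, S ω * (1 - A ω) * (f2 (X ω) * (Y ω - n10 (X ω))) ∂P)) := by
    have h23 : ∫ ω, (S ω * A ω * (f1 (X ω) * (Y ω - n11 (X ω)))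
          - S ω * (1 - A ω) * (f2 (X ω) * (Y ω - n10 (X ω)))) ∂P
        = (∫ ω, S ω * A ω * (f1 (X ω) * (Y ω - n11 (X ω))) ∂P)
          - ∫ ω, S ω * (1 - A ω) * (f2 (X ω) * (Y ω - n10 (X ω))) ∂P :=
      integral_sub int2 int3
    have hsplit : ∫ ω, ((1 - S ω) * (n11 (X ω) / n10 (X ω) * Y ω)
          + (S ω * A ω * (f1 (X ω) * (Y ω - n11 (X ω)))
            - S ω * (1 - A ω) * (f2 (X ω) * (Y ω - n10 (X ω))))) ∂P
        = (∫ ω, (1 - S ω) * (n11 (X ω) / n10 (X ω) * Y ω) ∂P) +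
          ((∫ ω, S ω * A ω * (f1 (X ω) * (Y ω - n11 (X ω))) ∂P) -
            ∫ ω, S ω * (1 - A ω) * (f2 (X ω) * (Y ω - n10 (X ω))) ∂P) := by
      rw [← h23]
      exact integral_add int1 (int2.sub int3)
    have e0 : ∫ ω, H1 P X S A Y q n11 n10 n00 nt ω ∂P
        = ∫ ω, (P {ω' | S ω' = 0}).toReal⁻¹ *
            ((1 - S ω) * (n11 (X ω) / n10 (X ω) * Y ω)
              + (S ω * A ω * (f1 (X ω) * (Y ω - n11 (X ω)))
                - S ω * (1 - A ω) * (f2 (X ω) * (Y ω - n10 (X ω))))) ∂P := by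
      refine integral_congr_ae (ae_of_all _ fun ω => ?_)
      simp only [H1, hf1, hf2]
      ring
    have e1 : ∫ ω, (P {ω' | S ω' = 0}).toReal⁻¹ *
            ((1 - S ω) * (n11 (X ω) / n10 (X ω) * Y ω)
              + (S ω * A ω * (f1 (X ω) * (Y ω - n11 (X ω)))
                - S ω * (1 - A ω) * (f2 (X ω) * (Y ω - n10 (X ω))))) ∂P
        = (P {ω' | S ω' = 0}).toReal⁻¹ *
            ∫ ω, ((1 - S ω) * (n11 (X ω) / n10 (X ω) * Y ω)
              + (S ω * A ω * (f1 (X ω) * (Y ω - n11 (X ω)))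
                - S ω * (1 - A ω) * (f2 (X ω) * (Y ω - n10 (X ω))))) ∂P :=
      integral_const_mul _ _
    rw [e0, e1, hsplit]
  -- conversion of the (1-S) term
  have w0 : ∫ ω, (1 - S ω) * (n11 (X ω) / n10 (X ω) * Y ω) ∂P
      = ∫ ω in {ω | S ω = 0}, n11 (X ω) / n10 (X ω) * Y ω ∂P := by
    refine weight_integral P hB0 _ _ (fun ω hω => ?_) (fun ω hω => ?_)
    · have h0 : S ω = 0 := hω
      rw [h0]; ring
    · rcases hS01 ω with h | h
      · exact absurd h hω
      · rw [h]; ring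
  -- conversion of the (S,A=1) term
  have hT1 : ∫ ω, S ω * A ω * (f1 (X ω) * (Y ω - n11 (X ω))) ∂P
      = ∫ ω in {ω | S ω = 1}, q (X ω) * ((μ11 (X ω) - n11 (X ω)) * f1 (X ω)) ∂P := by
    calc ∫ ω, S ω * A ω * (f1 (X ω) * (Y ω - n11 (X ω))) ∂P
        = ∫ ω in {ω | S ω = 1 ∧ A ω = 1}, f1 (X ω) * (Y ω - n11 (X ω)) ∂P := by
          refine weight_integral P hB11 _ _ (fun ω hω => ?_) (fun ω hω => ?_)
          · obtain ⟨h1, h2⟩ := hω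
            rw [h1, h2]; ring
          · rcases hS01 ω with h | h
            · rw [h]; ring
            · rcases hA01 ω with h' | h'
              · rw [h']; ring
              · exact absurd ⟨h, h'⟩ hω
      _ = ∫ ω in {ω | S ω = 1 ∧ A ω = 1}, (Y ω - n11 (X ω)) * f1 (X ω) ∂P :=
          integral_congr_ae (ae_of_all _ fun ω => by ring)
      _ = ∫ ω in {ω | S ω = 1 ∧ A ω = 1}, (μ11 (X ω) - n11 (X ω)) * f1 (X ω) ∂P :=
          cond_shift hμ11 hX hY f1 n11 mf1 mn11 hF1 b4 b5 b7 b8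
      _ = ∫ ω, S ω * A ω * ((μ11 (X ω) - n11 (X ω)) * f1 (X ω)) ∂P := by
          refine (weight_integral P hB11 _ _ (fun ω hω => ?_) (fun ω hω => ?_)).symm
          · obtain ⟨h1, h2⟩ := hω
            rw [h1, h2]; ring
          · rcases hS01 ω with h | h
            · rw [h]; ring
            · rcases hA01 ω with h' | h'
              · rw [h']; ring
              · exact absurd ⟨h, h'⟩ hω
      _ = ∫ ω, S ω * (A ω * ((μ11 (X ω) - n11 (X ω)) * f1 (X ω))) ∂P :=
          integral_congr_ae (ae_of_all _ fun ω => by ring)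
      _ = ∫ ω in {ω | S ω = 1}, A ω * ((μ11 (X ω) - n11 (X ω)) * f1 (X ω)) ∂P := by
          refine weight_integral P hB1 _ _ (fun ω hω => ?_) (fun ω hω => ?_)
          · exact hω
          · rcases hS01 ω with h | h
            · exact h
            · exact absurd h hω
      _ = ∫ ω in {ω | S ω = 1}, q (X ω) * ((μ11 (X ω) - n11 (X ω)) * f1 (X ω)) ∂P :=
          ver' hq (fun x => (μ11 x - n11 x) * f1 x) ((mμ11.sub mn11).mul mf1) hG1b b11
  -- integrable pieces on the restriction to {S = 1}
  have iG2r : Integrable (fun ω => (μ10 (X ω) - n10 (X ω)) * f2 (X ω))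
      (P.restrict {ω | S ω = 1}) :=
    (intOfBound (((mμ10.comp hX).sub (mn10.comp hX)).mul (mf2.comp hX)) _ b12).restrict
  have iAG2r : Integrable (fun ω => A ω * ((μ10 (X ω) - n10 (X ω)) * f2 (X ω)))
      (P.restrict {ω | S ω = 1}) :=
    (intOfBound (hA.mul (((mμ10.comp hX).sub (mn10.comp hX)).mul (mf2.comp hX))) _ b13).restrict
  have iqG1r : Integrable (fun ω => q (X ω) * ((μ11 (X ω) - n11 (X ω)) * f1 (X ω)))
      (P.restrict {ω | S ω = 1}) :=
    (intOfBound ((mq.comp hX).mul (((mμ11.comp hX).sub (mn11.comp hX)).mul (mf1.comp hX)))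
      _ b14).restrict
  have iqG2r : Integrable (fun ω => q (X ω) * ((μ10 (X ω) - n10 (X ω)) * f2 (X ω)))
      (P.restrict {ω | S ω = 1}) :=
    (intOfBound ((mq.comp hX).mul (((mμ10.comp hX).sub (mn10.comp hX)).mul (mf2.comp hX)))
      _ b15).restrict
  have i1qG2r : Integrable (fun ω => (1 - q (X ω)) * ((μ10 (X ω) - n10 (X ω)) * f2 (X ω)))
      (P.restrict {ω | S ω = 1}) :=
    (intOfBound ((measurable_const.sub (mq.comp hX)).mul
      (((mμ10.comp hX).sub (mn10.comp hX)).mul (mf2.comp hX))) _ b16).restrict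
  -- conversion of the (S,A=0) term
  have hT2 : ∫ ω, S ω * (1 - A ω) * (f2 (X ω) * (Y ω - n10 (X ω))) ∂P
      = ∫ ω in {ω | S ω = 1}, (1 - q (X ω)) * ((μ10 (X ω) - n10 (X ω)) * f2 (X ω)) ∂P := by
    calc ∫ ω, S ω * (1 - A ω) * (f2 (X ω) * (Y ω - n10 (X ω))) ∂P
        = ∫ ω in {ω | S ω = 1 ∧ A ω = 0}, f2 (X ω) * (Y ω - n10 (X ω)) ∂P := by
          refine weight_integral P hB10 _ _ (fun ω hω => ?_) (fun ω hω => ?_)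
          · obtain ⟨h1, h2⟩ := hω
            rw [h1, h2]; ring
          · rcases hS01 ω with h | h
            · rw [h]; ring
            · rcases hA01 ω with h' | h'
              · exact absurd ⟨h, h'⟩ hω
              · rw [h, h']; ring
      _ = ∫ ω in {ω | S ω = 1 ∧ A ω = 0}, (Y ω - n10 (X ω)) * f2 (X ω) ∂P :=
          integral_congr_ae (ae_of_all _ fun ω => by ring)
      _ = ∫ ω in {ω | S ω = 1 ∧ A ω = 0}, (μ10 (X ω) - n10 (X ω)) * f2 (X ω) ∂P :=
          cond_shift hμ10 hX hY f2 n10 mf2 mn10 hF2 b4 b6 b9 b10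
      _ = ∫ ω, S ω * (1 - A ω) * ((μ10 (X ω) - n10 (X ω)) * f2 (X ω)) ∂P := by
          refine (weight_integral P hB10 _ _ (fun ω hω => ?_) (fun ω hω => ?_)).symm
          · obtain ⟨h1, h2⟩ := hω
            rw [h1, h2]; ring
          · rcases hS01 ω with h | h
            · rw [h]; ring
            · rcases hA01 ω with h' | h'
              · exact absurd ⟨h, h'⟩ hω
              · rw [h, h']; ring
      _ = ∫ ω, S ω * ((1 - A ω) * ((μ10 (X ω) - n10 (X ω)) * f2 (X ω))) ∂P :=
          integral_congr_ae (ae_of_all _ fun ω => by ring)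
      _ = ∫ ω in {ω | S ω = 1}, (1 - A ω) * ((μ10 (X ω) - n10 (X ω)) * f2 (X ω)) ∂P := by
          refine weight_integral P hB1 _ _ (fun ω hω => ?_) (fun ω hω => ?_)
          · exact hω
          · rcases hS01 ω with h | h
            · exact h
            · exact absurd h hω
      _ = (∫ ω in {ω | S ω = 1}, (μ10 (X ω) - n10 (X ω)) * f2 (X ω) ∂P)
            - ∫ ω in {ω | S ω = 1}, A ω * ((μ10 (X ω) - n10 (X ω)) * f2 (X ω)) ∂P := by
          rw [← integral_sub iG2r iAG2r]
          exact integral_congr_ae (ae_of_all _ fun ω => by ring)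
      _ = (∫ ω in {ω | S ω = 1}, (μ10 (X ω) - n10 (X ω)) * f2 (X ω) ∂P)
            - ∫ ω in {ω | S ω = 1}, q (X ω) * ((μ10 (X ω) - n10 (X ω)) * f2 (X ω)) ∂P := by
          rw [ver' hq (fun x => (μ10 x - n10 x) * f2 x) ((mμ10.sub mn10).mul mf2) hG2b b12]
      _ = ∫ ω in {ω | S ω = 1}, (1 - q (X ω)) * ((μ10 (X ω) - n10 (X ω)) * f2 (X ω)) ∂P := by
          rw [← integral_sub iG2r iqG2r]
          exact integral_congr_ae (ae_of_all _ fun ω => by ring)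
  -- the central identity
  have hdd0 : (0:ℝ) ≤ M / ε + M / ε := by linarith
  have iψ : Integrable
      (fun ω => m0 (X ω) * (μ11 (X ω) / μ10 (X ω) - n11 (X ω) / n10 (X ω))) P :=
    intOfBound ((mm0.comp hX).mul
      (((mμ11.comp hX).div (mμ10.comp hX)).sub ((mn11.comp hX).div (mn10.comp hX)))) _ b19
  have iSψ : Integrable
      (fun ω => S ω * (m0 (X ω) * (μ11 (X ω) / μ10 (X ω) - n11 (X ω) / n10 (X ω)))) P :=
    intOfBound (hS.mul ((mm0.comp hX).mul
      (((mμ11.comp hX).div (mμ10.comp hX)).sub ((mn11.comp hX).div (mn10.comp hX))))) _ b20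
  have igψ : Integrable
      (fun ω => g (X ω) * (m0 (X ω) * (μ11 (X ω) / μ10 (X ω) - n11 (X ω) / n10 (X ω)))) P :=
    intOfBound ((mg.comp hX).mul ((mm0.comp hX).mul
      (((mμ11.comp hX).div (mμ10.comp hX)).sub ((mn11.comp hX).div (mn10.comp hX))))) _ b21
  have hmain : (∫ ω in {ω | S ω = 1}, q (X ω) * ((μ11 (X ω) - n11 (X ω)) * f1 (X ω)) ∂P)
        - ∫ ω in {ω | S ω = 1}, (1 - q (X ω)) * ((μ10 (X ω) - n10 (X ω)) * f2 (X ω)) ∂P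
      = ∫ ω in {ω | S ω = 0},
          (μ11 (X ω) / μ10 (X ω) - n11 (X ω) / n10 (X ω)) * Y ω ∂P := by
    have step1 : (∫ ω in {ω | S ω = 1}, q (X ω) * ((μ11 (X ω) - n11 (X ω)) * f1 (X ω)) ∂P)
          - ∫ ω in {ω | S ω = 1}, (1 - q (X ω)) * ((μ10 (X ω) - n10 (X ω)) * f2 (X ω)) ∂P
        = ∫ ω in {ω | S ω = 1},
            nt (X ω) * (n00 (X ω) / n10 (X ω)) *
              (μ10 (X ω) * (μ11 (X ω) / μ10 (X ω) - n11 (X ω) / n10 (X ω))) ∂P := by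
      rw [← integral_sub iqG1r i1qG2r]
      refine integral_congr_ae (ae_restrict_of_ae ?_)
      filter_upwards [b23] with ω hb
      obtain ⟨hq1, hq2, hn10e, hμ10e, hge⟩ := hb
      have hqne : q (X ω) ≠ 0 := ne_of_gt (lt_of_lt_of_le hε0 hq1)
      have h1qne : (1:ℝ) - q (X ω) ≠ 0 := ne_of_gt (by linarith)
      have hn10ne : n10 (X ω) ≠ 0 := abs_pos.1 (lt_of_lt_of_le hε0 hn10e)
      have hμ10ne : μ10 (X ω) ≠ 0 := abs_pos.1 (lt_of_lt_of_le hε0 hμ10e)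
      simp only [hf1, hf2]
      field_simp
      ring
    rw [step1]
    rcases hcase with hca | hcb
    · -- case (a): the outcome-ratio model is correct
      have hL : ∫ ω in {ω | S ω = 1},
          nt (X ω) * (n00 (X ω) / n10 (X ω)) *
            (μ10 (X ω) * (μ11 (X ω) / μ10 (X ω) - n11 (X ω) / n10 (X ω))) ∂P = 0 := by
        have h0 : ∀ᵐ ω ∂(P.restrict {ω | S ω = 1}),
            nt (X ω) * (n00 (X ω) / n10 (X ω)) *
              (μ10 (X ω) * (μ11 (X ω) / μ10 (X ω) - n11 (X ω) / n10 (X ω))) = 0 := by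
          refine ae_restrict_of_ae ?_
          filter_upwards [hca] with ω h
          rw [h]; ring
        rw [integral_congr_ae h0, integral_zero]
      have hR : ∫ ω in {ω | S ω = 0},
          (μ11 (X ω) / μ10 (X ω) - n11 (X ω) / n10 (X ω)) * Y ω ∂P = 0 := by
        have h0 : ∀ᵐ ω ∂(P.restrict {ω | S ω = 0}),
            (μ11 (X ω) / μ10 (X ω) - n11 (X ω) / n10 (X ω)) * Y ω = 0 := by
          refine ae_restrict_of_ae ?_
          filter_upwards [hca] with ω h
          rw [h]; ring
        rw [integral_congr_ae h0, integral_zero]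
      rw [hL, hR]
    · -- case (b): the other nuisance models are correct
      have hLchain : ∫ ω in {ω | S ω = 1},
            nt (X ω) * (n00 (X ω) / n10 (X ω)) *
              (μ10 (X ω) * (μ11 (X ω) / μ10 (X ω) - n11 (X ω) / n10 (X ω))) ∂P
          = ∫ ω, (1 - g (X ω)) *
              (m0 (X ω) * (μ11 (X ω) / μ10 (X ω) - n11 (X ω) / n10 (X ω))) ∂P := by
        calc ∫ ω in {ω | S ω = 1},
              nt (X ω) * (n00 (X ω) / n10 (X ω)) *
                (μ10 (X ω) * (μ11 (X ω) / μ10 (X ω) - n11 (X ω) / n10 (X ω))) ∂P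
            = ∫ ω in {ω | S ω = 1}, (1 - g (X ω)) / g (X ω) *
                (m0 (X ω) * (μ11 (X ω) / μ10 (X ω) - n11 (X ω) / n10 (X ω))) ∂P := by
              refine integral_congr_ae (ae_restrict_of_ae ?_)
              filter_upwards [hcb, b23] with ω hb hat
              obtain ⟨h00, h10, hτ⟩ := hb
              obtain ⟨hq1, hq2, hn10e, hμ10e, hge⟩ := hat
              have hμ10ne : μ10 (X ω) ≠ 0 := abs_pos.1 (lt_of_lt_of_le hε0 hμ10e)
              have hgne : g (X ω) ≠ 0 := ne_of_gt (lt_of_lt_of_le hε0 hge)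
              rw [h00, h10, hτ]
              field_simp
          _ = ∫ ω, S ω * ((1 - g (X ω)) / g (X ω) *
                (m0 (X ω) * (μ11 (X ω) / μ10 (X ω) - n11 (X ω) / n10 (X ω)))) ∂P := by
              refine (weight_integral P hB1 _ _ (fun ω hω => ?_) (fun ω hω => ?_)).symm
              · exact hω
              · rcases hS01 ω with h | h
                · exact h
                · exact absurd h hω
          _ = ∫ ω in Set.univ, S ω * ((1 - g (X ω)) / g (X ω) *
                (m0 (X ω) * (μ11 (X ω) / μ10 (X ω) - n11 (X ω) / n10 (X ω)))) ∂P :=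
              setIntegral_univ.symm
          _ = ∫ ω in Set.univ, g (X ω) * ((1 - g (X ω)) / g (X ω) *
                (m0 (X ω) * (μ11 (X ω) / μ10 (X ω) - n11 (X ω) / n10 (X ω)))) ∂P :=
              ver' hg
                (fun x => (1 - g x) / g x * (m0 x * (μ11 x / μ10 x - n11 x / n10 x)))
                (((measurable_const.sub mg).div mg).mul (mm0.mul
                  ((mμ11.div mμ10).sub (mn11.div mn10))))
                (mul_nonneg hM0.le hψb) b22
          _ = ∫ ω, g (X ω) * ((1 - g (X ω)) / g (X ω) *
                (m0 (X ω) * (μ11 (X ω) / μ10 (X ω) - n11 (X ω) / n10 (X ω)))) ∂P :=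
              setIntegral_univ
          _ = ∫ ω, (1 - g (X ω)) *
                (m0 (X ω) * (μ11 (X ω) / μ10 (X ω) - n11 (X ω) / n10 (X ω))) ∂P := by
              refine integral_congr_ae ?_
              filter_upwards [b23] with ω hat
              obtain ⟨hq1, hq2, hn10e, hμ10e, hge⟩ := hat
              have hgne : g (X ω) ≠ 0 := ne_of_gt (lt_of_lt_of_le hε0 hge)
              field_simp
      have hRchain : ∫ ω in {ω | S ω = 0},
            (μ11 (X ω) / μ10 (X ω) - n11 (X ω) / n10 (X ω)) * Y ω ∂P
          = ∫ ω, (1 - g (X ω)) *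
              (m0 (X ω) * (μ11 (X ω) / μ10 (X ω) - n11 (X ω) / n10 (X ω))) ∂P := by
        calc ∫ ω in {ω | S ω = 0},
              (μ11 (X ω) / μ10 (X ω) - n11 (X ω) / n10 (X ω)) * Y ω ∂P
            = ∫ ω in {ω | S ω = 0},
                Y ω * (μ11 (X ω) / μ10 (X ω) - n11 (X ω) / n10 (X ω)) ∂P :=
              integral_congr_ae (ae_of_all _ fun ω => by ring)
          _ = ∫ ω in {ω | S ω = 0},
                m0 (X ω) * (μ11 (X ω) / μ10 (X ω) - n11 (X ω) / n10 (X ω)) ∂P :=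
              ver' hm0 (fun x => μ11 x / μ10 x - n11 x / n10 x)
                ((mμ11.div mμ10).sub (mn11.div mn10)) hdd0 b17
          _ = ∫ ω, (1 - S ω) *
                (m0 (X ω) * (μ11 (X ω) / μ10 (X ω) - n11 (X ω) / n10 (X ω))) ∂P := by
              refine (weight_integral P hB0 _ _ (fun ω hω => ?_) (fun ω hω => ?_)).symm
              · have h0 : S ω = 0 := hω
                rw [h0]; ring
              · rcases hS01 ω with h | h
                · exact absurd h hω
                · rw [h]; ring
          _ = (∫ ω, m0 (X ω) * (μ11 (X ω) / μ10 (X ω) - n11 (X ω) / n10 (X ω)) ∂P)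
                - ∫ ω, S ω *
                    (m0 (X ω) * (μ11 (X ω) / μ10 (X ω) - n11 (X ω) / n10 (X ω))) ∂P := by
              rw [← integral_sub iψ iSψ]
              exact integral_congr_ae (ae_of_all _ fun ω => by ring)
          _ = (∫ ω, m0 (X ω) * (μ11 (X ω) / μ10 (X ω) - n11 (X ω) / n10 (X ω)) ∂P)
                - ∫ ω, g (X ω) *
                    (m0 (X ω) * (μ11 (X ω) / μ10 (X ω) - n11 (X ω) / n10 (X ω))) ∂P := by
              have huniv : ∫ ω in Set.univ, S ω *
                    (m0 (X ω) * (μ11 (X ω) / μ10 (X ω) - n11 (X ω) / n10 (X ω))) ∂P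
                  = ∫ ω in Set.univ, g (X ω) *
                    (m0 (X ω) * (μ11 (X ω) / μ10 (X ω) - n11 (X ω) / n10 (X ω))) ∂P :=
                ver' hg (fun x => m0 x * (μ11 x / μ10 x - n11 x / n10 x))
                  (mm0.mul ((mμ11.div mμ10).sub (mn11.div mn10))) hψb b19
              rw [setIntegral_univ, setIntegral_univ] at huniv
              rw [huniv]
          _ = ∫ ω, (1 - g (X ω)) *
                (m0 (X ω) * (μ11 (X ω) / μ10 (X ω) - n11 (X ω) / n10 (X ω))) ∂P := by
              rw [← integral_sub iψ igψ]
              exact integral_congr_ae (ae_of_all _ fun ω => by ring)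
      rw [hLchain, hRchain]
  -- assemble
  have irtYr : Integrable (fun ω => n11 (X ω) / n10 (X ω) * Y ω)
      (P.restrict {ω | S ω = 0}) :=
    (intOfBound (((mn11.comp hX).div (mn10.comp hX)).mul hY) (M / ε * M)
      (by filter_upwards [b24, b4] with ω h1 h2; exact mul_bound' h1 h2)).restrict
  have iddYr : Integrable
      (fun ω => (μ11 (X ω) / μ10 (X ω) - n11 (X ω) / n10 (X ω)) * Y ω)
      (P.restrict {ω | S ω = 0}) :=
    (intOfBound ((((mμ11.comp hX).div (mμ10.comp hX)).sub
      ((mn11.comp hX).div (mn10.comp hX))).mul hY) _ b18).restrict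
  have hsum : (∫ ω in {ω | S ω = 0}, n11 (X ω) / n10 (X ω) * Y ω ∂P)
        + ∫ ω in {ω | S ω = 0},
            (μ11 (X ω) / μ10 (X ω) - n11 (X ω) / n10 (X ω)) * Y ω ∂P
      = ∫ ω in {ω | S ω = 0}, μ11 (X ω) / μ10 (X ω) * Y ω ∂P := by
    rw [← integral_add irtYr iddYr]
    exact integral_congr_ae (ae_of_all _ fun ω => by ring)
  calc ∫ ω, H1 P X S A Y q n11 n10 n00 nt ω ∂P
      = (P {ω' | S ω' = 0}).toReal⁻¹ *
        ((∫ ω, (1 - S ω) * (n11 (X ω) / n10 (X ω) * Y ω) ∂P) +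
          ((∫ ω, S ω * A ω * (f1 (X ω) * (Y ω - n11 (X ω))) ∂P) -
            ∫ ω, S ω * (1 - A ω) * (f2 (X ω) * (Y ω - n10 (X ω))) ∂P)) := hH1
    _ = (P {ω' | S ω' = 0}).toReal⁻¹ *
        ((∫ ω in {ω | S ω = 0}, n11 (X ω) / n10 (X ω) * Y ω ∂P) +
          ∫ ω in {ω | S ω = 0},
            (μ11 (X ω) / μ10 (X ω) - n11 (X ω) / n10 (X ω)) * Y ω ∂P) := by
        rw [w0, hT1, hT2, hmain]
    _ = (P {ω' | S ω' = 0}).toReal⁻¹ *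
        ∫ ω in {ω | S ω = 0}, μ11 (X ω) / μ10 (X ω) * Y ω ∂P := by rw [hsum]
    _ = condMean P (fun ω => μ11 (X ω) / μ10 (X ω) * Y ω) {ω | S ω = 0} := by
        simp only [condMean]
        rw [div_eq_mul_inv]
        exact mul_comm _ _
end
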